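/- arXiv:2307.01808 — 6 statements merged into one kernel-verified Lean document; each statement's English description precedes it below -/
import Mathlib

section
/- Let E ⊆ ℂ be compact, let α be an interior point of E, and let D := {1/(z − α) : z ∈ ℂ ∖ E} ∪ {0}. Then the analytic capacity of E equals the supremum of |F′(0)| over all functions F : ℂ → ℂ that are holomorphic on D, satisfy ‖F(ζ)‖ ≤ 1 for every ζ ∈ D, and satisfy F(0) = 0; that is, γ(E) = sSup {‖deriv F 0‖ : F holomorphic on D, ‖F‖ ≤ 1 on D, F(0) = 0}. -/
open Filter Bornology
open Complex Set Metric Topology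

lemma mobius_norm_le {L w : ℂ} (hL : ‖L‖ ≤ 1) (hw : ‖w‖ ≤ 1) :
    ‖w - L‖ ≤ ‖1 - (starRingEnd ℂ) L * w‖ := by
  have key : ((normSq (1 - (starRingEnd ℂ) L * w) : ℂ)) =
      (normSq (w - L) : ℂ) + (1 - (normSq L : ℂ)) * (1 - (normSq w : ℂ)) := by
    rw [← mul_conj, ← mul_conj, ← mul_conj, ← mul_conj]
    simp only [map_sub, map_mul, map_one, Complex.conj_conj]
    ring
  have key' : normSq (1 - (starRingEnd ℂ) L * w) =
      normSq (w - L) + (1 - normSq L) * (1 - normSq w) := by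
    exact_mod_cast key
  have e1 : normSq L = ‖L‖ * ‖L‖ := by
    rw [Complex.normSq_eq_norm_sq]; ring
  have e2 : normSq w = ‖w‖ * ‖w‖ := by
    rw [Complex.normSq_eq_norm_sq]; ring
  have h1 : normSq L ≤ 1 := by rw [e1]; exact mul_le_one₀ hL (norm_nonneg _) hL
  have h2 : normSq w ≤ 1 := by rw [e2]; exact mul_le_one₀ hw (norm_nonneg _) hw
  have : normSq (w - L) ≤ normSq (1 - (starRingEnd ℂ) L * w) := by nlinarith
  simpa [Complex.norm_def] using Real.sqrt_le_sqrt this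


/-- `f` is admissible for the compact set `E` with limit `L` at infinity and
derivative `c` at infinity: `f` is holomorphic on `ℂ \ E`, bounded by `1` there,
`f → L` and `z·(f z − L) → c` as `z → ∞`. -/
def Admissible (E : Set ℂ) (f : ℂ → ℂ) (L c : ℂ) : Prop :=
  DifferentiableOn ℂ f Eᶜ ∧ (∀ z ∈ Eᶜ, ‖f z‖ ≤ 1) ∧
    Tendsto f (cobounded ℂ) (nhds L) ∧
    Tendsto (fun z => z * (f z - L)) (cobounded ℂ) (nhds c)

/-- The analytic capacity of `E`: the supremum of `‖f′(∞)‖` over admissible `f`. -/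
noncomputable def analyticCapacity (E : Set ℂ) : ℝ :=
  sSup {r : ℝ | ∃ f L c, Admissible E f L c ∧ r = ‖c‖}

/-- The analytic capacity of a compact set `E` equals the supremum of `‖F′(0)‖` over
functions `F` holomorphic on `D = M(ℂ \ E) ∪ {0}` (where `M z = 1/(z − α)` and `α` is
an interior point of `E`), bounded by `1` on `D`, with `F 0 = 0`. -/
theorem analyticCapacity_eq_sSup_deriv (E : Set ℂ) (hE : IsCompact E) (α : ℂ)
    (hα : α ∈ interior E) (D : Set ℂ)
    (hD : D = ((fun z : ℂ => 1 / (z - α)) '' Eᶜ) ∪ {0}) :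
    analyticCapacity E =
      sSup {r : ℝ | ∃ F : ℂ → ℂ, DifferentiableOn ℂ F D ∧ (∀ ζ ∈ D, ‖F ζ‖ ≤ 1) ∧
        F 0 = 0 ∧ r = ‖deriv F 0‖} := by
  have hαE : α ∈ E := interior_subset hα
  obtain ⟨R, hR0, hER⟩ := hE.isBounded.subset_ball_lt 0 α
  have himg : (fun z : ℂ => 1 / (z - α)) '' Eᶜ = {w : ℂ | w ≠ 0 ∧ α + 1/w ∈ Eᶜ} := by
    ext w
    constructor
    · rintro ⟨z, hz, rfl⟩
      have hzα : z - α ≠ 0 := sub_ne_zero.2 (fun h => hz (h ▸ hαE))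
      refine ⟨by simpa using hzα, ?_⟩
      have : α + 1/(1/(z-α)) = z := by field_simp; ring
      rwa [this]
    · rintro ⟨hw, hz⟩
      refine ⟨α + 1/w, hz, ?_⟩
      show 1 / (α + 1/w - α) = w
      rw [add_sub_cancel_left, one_div_one_div]
  have hball : ball (0:ℂ) (1/R) ⊆ D := by
    intro ζ hζ
    rcases eq_or_ne ζ 0 with rfl | hζ0
    · exact hD ▸ Or.inr rfl
    · rw [hD, himg]
      refine Or.inl ⟨hζ0, fun hmem => ?_⟩
      have h1 : ‖ζ‖ < 1/R := by simpa [mem_ball, dist_eq_norm] using hζ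
      have h2 : ‖α + 1/ζ - α‖ < R := by
        simpa [mem_ball, dist_eq_norm] using hER hmem
      rw [add_sub_cancel_left] at h2
      have h3 : ‖(1:ℂ)/ζ‖ = 1/‖ζ‖ := by simp
      rw [h3] at h2
      have hn0 : 0 < ‖ζ‖ := norm_pos_iff.2 hζ0
      have := (div_lt_iff₀ hn0).1 h2
      have h4 := (lt_div_iff₀ hR0).1 h1
      nlinarith
  have hDopen : IsOpen D := by
    have hV : IsOpen {w : ℂ | w ≠ 0 ∧ α + 1/w ∈ Eᶜ} := by
      have : {w : ℂ | w ≠ 0 ∧ α + 1/w ∈ Eᶜ} =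
          {(0:ℂ)}ᶜ ∩ (fun w : ℂ => α + 1/w) ⁻¹' Eᶜ := by
        ext w; simp [and_comm]
      rw [this]
      refine ContinuousOn.isOpen_inter_preimage ?_ isOpen_compl_singleton
        hE.isClosed.isOpen_compl
      exact continuousOn_const.add (continuousOn_const.div continuousOn_id fun w hw => hw)
    have : D = {w : ℂ | w ≠ 0 ∧ α + 1/w ∈ Eᶜ} ∪ ball (0:ℂ) (1/R) := by
      apply Subset.antisymm
      · rw [hD, himg]
        refine union_subset subset_union_left ?_
        intro w hw
        rw [mem_singleton_iff] at hw
        subst hw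
        exact Or.inr (mem_ball_self (by positivity))
      · exact union_subset (by rw [hD, himg]; exact subset_union_left) hball
    rw [this]
    exact hV.union isOpen_ball
  have h0D : (0:ℂ) ∈ D := hD ▸ Or.inr rfl
  have hEc : IsOpen Eᶜ := hE.isClosed.isOpen_compl
  have hsub : Tendsto (fun z : ℂ => z - α) (cobounded ℂ) (cobounded ℂ) := by
    rw [← tendsto_norm_atTop_iff_cobounded]
    refine tendsto_atTop_mono (fun z => norm_sub_norm_le z α) ?_
    simpa [sub_eq_add_neg] using
      tendsto_atTop_add_const_right (cobounded ℂ) (-‖α‖) tendsto_norm_cobounded_atTop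
  have hMten' : Tendsto (fun z : ℂ => (z - α)⁻¹) (cobounded ℂ) (𝓝[≠] 0) :=
    tendsto_inv₀_cobounded'.comp hsub
  have hMten : Tendsto (fun z : ℂ => (z - α)⁻¹) (cobounded ℂ) (𝓝 0) :=
    hMten'.mono_right nhdsWithin_le_nhds
  have hne : ∀ᶠ z : ℂ in cobounded ℂ, z - α ≠ 0 := by
    filter_upwards [eventually_cobounded_le_norm (‖α‖ + 1)] with z hz h
    rw [sub_eq_zero] at h
    subst h
    linarith
  have hfrac : Tendsto (fun z : ℂ => z * (z - α)⁻¹) (cobounded ℂ) (𝓝 1) := by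
    have h1 : Tendsto (fun z : ℂ => 1 + α * (z - α)⁻¹) (cobounded ℂ) (𝓝 1) := by
      have h2 := tendsto_const_nhds (x := (1:ℂ)) (f := cobounded ℂ)
      have h3 := (tendsto_const_nhds (x := α) (f := cobounded ℂ)).mul hMten
      simpa using h2.add h3
    refine Tendsto.congr' ?_ h1
    filter_upwards [hne] with z hz
    field_simp
    ring
  have hMzD : ∀ z ∈ Eᶜ, (z - α)⁻¹ ∈ D := fun z hz =>
    hD ▸ Or.inl ⟨z, hz, one_div _⟩
  have hdirA : ∀ F : ℂ → ℂ, DifferentiableOn ℂ F D → (∀ ζ ∈ D, ‖F ζ‖ ≤ 1) → F 0 = 0 →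
      ∃ f L c, Admissible E f L c ∧ ‖deriv F 0‖ = ‖c‖ := by
    intro F hFd hFle hF0
    refine ⟨fun z => F ((z - α)⁻¹), 0, deriv F 0, ⟨?_, ?_, ?_, ?_⟩, rfl⟩
    · intro z hz
      have hzα : z - α ≠ 0 := sub_ne_zero.2 (fun h => hz (h ▸ hαE))
      have hMd : DifferentiableAt ℂ (fun z : ℂ => (z - α)⁻¹) z :=
        (differentiableAt_id.sub (differentiableAt_const α)).inv hzα
      exact ((hFd.differentiableAt (hDopen.mem_nhds (hMzD z hz))).comp z
        hMd).differentiableWithinAt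
    · exact fun z hz => hFle _ (hMzD z hz)
    · have hcF : ContinuousAt F 0 :=
        (hFd.differentiableAt (hDopen.mem_nhds h0D)).continuousAt
      have := hcF.tendsto
      rw [hF0] at this
      exact this.comp hMten
    · have hFdAt : HasDerivAt F (deriv F 0) 0 :=
        (hFd.differentiableAt (hDopen.mem_nhds h0D)).hasDerivAt
      have hsl := hasDerivAt_iff_tendsto_slope.1 hFdAt
      have h2 := hsl.comp hMten'
      have h3 := hfrac.mul h2
      rw [one_mul] at h3
      refine Tendsto.congr' ?_ h3
      filter_upwards [hne] with z hz
      have hw : (z - α)⁻¹ ≠ 0 := inv_ne_zero hz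
      show z * (z - α)⁻¹ * slope F 0 ((z - α)⁻¹) = z * (F ((z - α)⁻¹) - 0)
      rw [slope_def_field, hF0, sub_zero, sub_zero]
      rw [div_inv_eq_mul, mul_assoc, mul_comm (F (z - α)⁻¹), ← mul_assoc, ← mul_assoc,
        mul_assoc z, inv_mul_cancel₀ hz, mul_one]
  have hcobne : ∀ᶠ z : ℂ in cobounded ℂ, z ∈ Eᶜ := by
    filter_upwards [eventually_cobounded_le_norm (‖α‖ + R)] with z hz hmem
    have h1 := hER hmem
    rw [mem_ball, dist_eq_norm] at h1
    have h2 : ‖z‖ ≤ ‖z - α‖ + ‖α‖ := by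
      simpa using norm_add_le (z - α) α
    linarith
  have hNten : Tendsto (fun ζ : ℂ => α + 1/ζ) (𝓝[≠] (0:ℂ)) (cobounded ℂ) := by
    have h1 : Tendsto (fun ζ : ℂ => ζ⁻¹) (𝓝[≠] (0:ℂ)) (cobounded ℂ) :=
      tendsto_inv₀_nhdsNE_zero
    rw [← tendsto_norm_atTop_iff_cobounded] at h1 ⊢
    refine tendsto_atTop_mono (fun ζ => ?_) (tendsto_atTop_add_const_right _ (-‖α‖) h1)
    have := norm_add_le α (1/ζ)
    simp only [one_div] at this ⊢
    have h3 : ‖ζ⁻¹‖ ≤ ‖α + ζ⁻¹‖ + ‖α‖ := by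
      have := norm_add_le (α + ζ⁻¹) (-α)
      simpa using this
    linarith
  have hdirB : ∀ f L c, Admissible E f L c →
      ∃ F : ℂ → ℂ, DifferentiableOn ℂ F D ∧ (∀ ζ ∈ D, ‖F ζ‖ ≤ 1) ∧ F 0 = 0 ∧
        ‖c‖ ≤ ‖deriv F 0‖ := by
    rintro f L c ⟨hfd, hfle, hfL, hfc⟩
    set G : ℂ → ℂ := fun ζ => if ζ = 0 then L else f (α + 1/ζ) with hGdef
    have hG0 : G 0 = L := if_pos rfl
    have hGne : ∀ ζ : ℂ, ζ ≠ 0 → G ζ = f (α + 1/ζ) := fun ζ h => if_neg h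
    have hV : D \ {0} = {w : ℂ | w ≠ 0 ∧ α + 1/w ∈ Eᶜ} := by
      rw [hD, himg]
      ext w
      constructor
      · rintro ⟨hw, h0⟩
        rcases hw with hw | hw
        · exact hw
        · exact absurd hw h0
      · intro hw
        exact ⟨Or.inl hw, hw.1⟩
    have hGtend : Tendsto G (𝓝[≠] (0:ℂ)) (𝓝 L) := by
      refine Tendsto.congr' ?_ (hfL.comp hNten)
      filter_upwards [self_mem_nhdsWithin] with ζ hζ
      exact (hGne ζ hζ).symm
    have hGc0 : ContinuousAt G 0 := by
      unfold ContinuousAt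
      rw [hG0, ← nhdsNE_sup_pure]
      rw [tendsto_sup]
      refine ⟨hGtend, ?_⟩
      rw [tendsto_pure_left]
      intro s hs
      rw [hG0]
      exact mem_of_mem_nhds hs
    have hGdV : DifferentiableOn ℂ G (D \ {0}) := by
      intro ζ hζ
      rw [hV] at hζ
      obtain ⟨hζ0, hζE⟩ := hζ
      have hNd : DifferentiableAt ℂ (fun w : ℂ => α + 1/w) ζ := by
        simp only [one_div]
        exact (differentiableAt_const α).add (differentiableAt_id.inv hζ0)
      have hfz : DifferentiableAt ℂ f (α + 1/ζ) := hfd.differentiableAt (hEc.mem_nhds hζE)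
      have hcomp : DifferentiableAt ℂ (fun w : ℂ => f (α + 1/w)) ζ := hfz.comp ζ hNd
      have heq : G =ᶠ[𝓝 ζ] fun w : ℂ => f (α + 1/w) := by
        filter_upwards [isOpen_compl_singleton.mem_nhds hζ0] with w hw
        exact hGne w hw
      exact (hcomp.congr_of_eventuallyEq heq).differentiableWithinAt
    have hGd : DifferentiableOn ℂ G D :=
      (Complex.differentiableOn_compl_singleton_and_continuousAt_iff
        (hDopen.mem_nhds h0D)).1 ⟨hGdV, hGc0⟩
    have hGdAt : DifferentiableAt ℂ G 0 := hGd.differentiableAt (hDopen.mem_nhds h0D)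
    have hslc : Tendsto (slope G 0) (𝓝[≠] (0:ℂ)) (𝓝 c) := by
      have h2 : Tendsto (fun z : ℂ => f z - L) (cobounded ℂ) (𝓝 0) := by
        simpa using hfL.sub (tendsto_const_nhds (x := L))
      have h3 := hfc.sub ((tendsto_const_nhds (x := α) (f := cobounded ℂ)).mul h2)
      rw [mul_zero, sub_zero] at h3
      have h1 : Tendsto (fun z : ℂ => (z - α) * (f z - L)) (cobounded ℂ) (𝓝 c) :=
        h3.congr (fun z => by ring)
      have h4 := h1.comp hNten
      refine Tendsto.congr' ?_ h4
      filter_upwards [self_mem_nhdsWithin] with ζ (hζ : ζ ≠ 0)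
      show (α + 1/ζ - α) * (f (α + 1/ζ) - L) = slope G 0 ζ
      rw [slope_def_field, hG0, hGne ζ hζ, sub_zero, add_sub_cancel_left, one_div,
        div_eq_mul_inv, mul_comm]
    have hderiv : HasDerivAt G c 0 := by
      have h5 := hasDerivAt_iff_tendsto_slope.1 hGdAt.hasDerivAt
      have h6 : deriv G 0 = c := tendsto_nhds_unique h5 hslc
      rw [← h6]
      exact hGdAt.hasDerivAt
    have hGle : ∀ ζ ∈ D, ‖G ζ‖ ≤ 1 := by
      intro ζ hζ
      rcases eq_or_ne ζ 0 with rfl | h0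
      · rw [hG0]
        exact le_of_tendsto hfL.norm (by filter_upwards [hcobne] with z hz using hfle z hz)
      · rw [hGne ζ h0]
        have hm : ζ ∈ D \ {0} := ⟨hζ, h0⟩
        rw [hV] at hm
        exact hfle _ hm.2
    have hL1 : ‖L‖ ≤ 1 := by rw [← hG0]; exact hGle 0 h0D
    rcases lt_or_eq_of_le hL1 with hLlt | hLeq
    · have hden : ∀ w : ℂ, ‖w‖ ≤ 1 → 1 - (starRingEnd ℂ) L * w ≠ 0 := by
        intro w hw h
        have h1 : ‖(starRingEnd ℂ) L * w‖ < 1 := by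
          rw [norm_mul, RCLike.norm_conj]
          calc ‖L‖ * ‖w‖ ≤ ‖L‖ * 1 := mul_le_mul_of_nonneg_left hw (norm_nonneg L)
            _ = ‖L‖ := mul_one _
            _ < 1 := hLlt
        rw [sub_eq_zero] at h
        rw [← h] at h1
        simp at h1
      refine ⟨fun ζ => (G ζ - L) / (1 - (starRingEnd ℂ) L * G ζ), ?_, ?_, ?_, ?_⟩
      · exact DifferentiableOn.div (hGd.sub (differentiableOn_const L))
          ((differentiableOn_const 1).sub ((differentiableOn_const _).mul hGd))
          (fun ζ hζ => hden _ (hGle ζ hζ))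
      · intro ζ hζ
        rw [norm_div]
        have hnum := mobius_norm_le hL1 (hGle ζ hζ)
        have hd0 : (0:ℝ) < ‖1 - (starRingEnd ℂ) L * G ζ‖ :=
          norm_pos_iff.2 (hden _ (hGle ζ hζ))
        rw [div_le_one hd0]
        exact hnum
      · simp [hG0]
      · have hnum : HasDerivAt (fun ζ => G ζ - L) c 0 := hderiv.sub_const L
        have hden' : HasDerivAt (fun ζ => 1 - (starRingEnd ℂ) L * G ζ)
            (-((starRingEnd ℂ) L * c)) 0 := by
          simpa using (hderiv.const_mul ((starRingEnd ℂ) L)).const_sub 1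
        have hd0 : (1 - (starRingEnd ℂ) L * G 0) ≠ 0 := hden _ (hGle 0 h0D)
        have hdiv := hnum.div hden' hd0
        have hval : deriv (fun ζ => (G ζ - L) / (1 - (starRingEnd ℂ) L * G ζ)) 0 =
            (c * (1 - (starRingEnd ℂ) L * G 0) - (G 0 - L) * -((starRingEnd ℂ) L * c)) /
              (1 - (starRingEnd ℂ) L * G 0) ^ 2 := hdiv.deriv
        rw [hG0] at hval
        rw [hG0] at hd0
        have hval2 : deriv (fun ζ => (G ζ - L) / (1 - (starRingEnd ℂ) L * G ζ)) 0 =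
            c / (1 - (starRingEnd ℂ) L * L) := by
          rw [hval]
          field_simp
          ring
        rw [hval2, norm_div]
        have hns : (starRingEnd ℂ) L * L = ((normSq L : ℝ) : ℂ) := by
          rw [mul_comm]; exact mul_conj L
        have hnsL : normSq L < 1 := by
          have : normSq L = ‖L‖ * ‖L‖ := by
            rw [Complex.normSq_eq_norm_sq]; ring
          nlinarith [norm_nonneg L]
        have hnorm : ‖1 - (starRingEnd ℂ) L * L‖ = 1 - normSq L := by
          rw [hns]
          rw [show (1:ℂ) - ((normSq L : ℝ) : ℂ) = (((1 - normSq L : ℝ)) : ℂ) by push_cast; ring]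
          rw [Complex.norm_real, Real.norm_eq_abs, abs_of_pos (by linarith)]
        rw [hnorm]
        rw [le_div_iff₀ (by linarith : (0:ℝ) < 1 - normSq L)]
        nlinarith [norm_nonneg c, normSq_nonneg L]
    · have hDn : ∀ᶠ ζ in 𝓝 (0:ℂ), DifferentiableAt ℂ G ζ :=
        eventually_of_mem (hDopen.mem_nhds h0D)
          (fun ζ hζ => hGd.differentiableAt (hDopen.mem_nhds hζ))
      have hmax : IsLocalMax (norm ∘ G) 0 := by
        filter_upwards [hDopen.mem_nhds h0D] with ζ hζ
        show ‖G ζ‖ ≤ ‖G 0‖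
        rw [hG0, hLeq]
        exact hGle ζ hζ
      have hev : G =ᶠ[𝓝 (0:ℂ)] fun _ => G 0 :=
        Complex.eventually_eq_of_isLocalMax_norm hDn hmax
      have hd0 : deriv G 0 = 0 := by
        rw [hev.deriv_eq]
        exact deriv_const _ _
      have hc : c = 0 := by rw [← hderiv.deriv]; exact hd0
      refine ⟨fun _ => (0:ℂ), differentiableOn_const 0, fun ζ _ => by simp, rfl, ?_⟩
      simp [hc]
  set SF := {r : ℝ | ∃ F : ℂ → ℂ, DifferentiableOn ℂ F D ∧ (∀ ζ ∈ D, ‖F ζ‖ ≤ 1) ∧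
      F 0 = 0 ∧ r = ‖deriv F 0‖} with hSF
  set SA := {r : ℝ | ∃ f L c, Admissible E f L c ∧ r = ‖c‖} with hSA
  have hSFbound : ∀ r ∈ SF, r ≤ 2 / (1/R) := by
    rintro r ⟨F, hFd, hFle, hF0, rfl⟩
    have hmaps : Set.MapsTo F (ball (0:ℂ) (1/R)) (ball (F 0) 2) := by
      intro ζ hζ
      rw [mem_ball, dist_eq_norm, hF0, sub_zero]
      exact lt_of_le_of_lt (hFle ζ (hball hζ)) one_lt_two
    exact Complex.norm_deriv_le_div_of_mapsTo_ball (hFd.mono hball) (hmaps.mono_right ball_subset_closedBall) (by positivity)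
  have hSFbdd : BddAbove SF := ⟨2 / (1/R), hSFbound⟩
  have hSFne : SF.Nonempty := by
    refine ⟨0, fun _ => 0, differentiableOn_const 0, fun ζ _ => by simp, rfl, by simp⟩
  have hSAne : SA.Nonempty := by
    refine ⟨0, fun _ => 0, 0, 0, ⟨differentiableOn_const 0, fun z _ => by simp,
      tendsto_const_nhds, ?_⟩, by simp⟩
    have he : (fun z : ℂ => z * ((0:ℂ) - 0)) = fun _ => (0:ℂ) := by funext z; simp
    rw [he]
    exact tendsto_const_nhds
  have hSAbdd : BddAbove SA := by
    refine ⟨2 / (1/R), ?_⟩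
    rintro r ⟨f, L, c, hadm, rfl⟩
    obtain ⟨F, h1, h2, h3, h4⟩ := hdirB f L c hadm
    exact h4.trans (hSFbound _ ⟨F, h1, h2, h3, rfl⟩)
  show sSup SA = sSup SF
  apply le_antisymm
  · apply csSup_le hSAne
    rintro r ⟨f, L, c, hadm, rfl⟩
    obtain ⟨F, h1, h2, h3, h4⟩ := hdirB f L c hadm
    exact h4.trans (le_csSup hSFbdd ⟨F, h1, h2, h3, rfl⟩)
  · apply csSup_le hSFne
    rintro r ⟨F, h1, h2, h3, rfl⟩
    obtain ⟨f, L, c, hadm, heq⟩ := hdirA F h1 h2 h3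
    exact le_csSup hSAbdd ⟨f, L, c, hadm, heq⟩
end

section
/- Let K, K′ ⊆ ℂ be compact sets and let Φ : ℂ → ℂ be holomorphic on ℂ ∖ K, map ℂ ∖ K bijectively onto ℂ ∖ K′, and satisfy Φ(z) − z → 0 along the cobounded filter of ℂ (z → ∞). Then the analytic capacities coincide: γ(K) = γ(K′). -/
open Filter Bornology

namespace AnalyticCapacityAux

open Metric Set

/-- The exterior of a ball in `ℂ` is preconnected. -/
lemma isPreconnected_norm_gt {M : ℝ} (hM : 0 ≤ M) :
    IsPreconnected {w : ℂ | M < ‖w‖} := by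
  have hrank : (1 : Cardinal) < Module.rank ℝ ℂ := by
    rw [Complex.rank_real_complex]; norm_num
  have hray : IsPreconnected ((fun r : ℝ => (r : ℂ)) '' Ioi M) :=
    (isPreconnected_Ioi).image _ (Complex.continuous_ofReal.continuousOn)
  have key : {w : ℂ | M < ‖w‖} =
      ⋃₀ ((fun r : ℝ => sphere (0:ℂ) r ∪ (fun r : ℝ => (r : ℂ)) '' Ioi M) '' Ioi M) := by
    ext w
    simp only [mem_sUnion, mem_image, mem_setOf_eq]
    constructor
    · intro hw
      exact ⟨_, ⟨‖w‖, hw, rfl⟩, Or.inl (by simp)⟩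
    · rintro ⟨s, ⟨r, hr, rfl⟩, hw⟩
      rcases hw with hw | ⟨x, hx, rfl⟩
      · simp only [mem_sphere_iff_norm, sub_zero] at hw
        rw [hw]; exact hr
      · rw [Complex.norm_real, Real.norm_eq_abs, abs_of_nonneg (hM.trans (le_of_lt hx))]
        exact hx
  rw [key]
  apply isPreconnected_sUnion ((M+1 : ℝ) : ℂ)
  · rintro s ⟨r, hr, rfl⟩
    exact Or.inr ⟨M+1, by simp, rfl⟩
  · rintro s ⟨r, hr, rfl⟩
    apply IsPreconnected.union ((r : ℝ) : ℂ)
    · simp [Real.norm_eq_abs, abs_of_nonneg (hM.trans hr.le)]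
    · exact ⟨r, hr, rfl⟩
    · exact isPreconnected_sphere hrank 0 r
    · exact hray

lemma tendsto_cobounded_of_sub {ψ : ℂ → ℂ}
    (hψ : Tendsto (fun w => ψ w - w) (cobounded ℂ) (nhds 0)) :
    Tendsto ψ (cobounded ℂ) (cobounded ℂ) := by
  rw [← tendsto_norm_atTop_iff_cobounded]
  have h1 : Tendsto (fun w : ℂ => ‖w‖ - 1) (cobounded ℂ) atTop :=
    tendsto_atTop_add_const_right _ (-1) tendsto_norm_cobounded_atTop
  apply tendsto_atTop_mono' _ _ h1
  filter_upwards [hψ.eventually (Metric.closedBall_mem_nhds (0:ℂ) one_pos)] with w hw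
  simp only [Metric.mem_closedBall, dist_zero_right] at hw
  have := norm_sub_norm_le w (ψ w)
  have h3 : ‖w - ψ w‖ = ‖ψ w - w‖ := norm_sub_rev _ _
  linarith

/-- Transfer of admissibility along a map `ψ` which is normalized at infinity. -/
lemma admissible_comp {E F : Set ℂ} {ψ f : ℂ → ℂ} {L c : ℂ}
    (hf : Admissible E f L c) (hdiff : DifferentiableOn ℂ (fun w => f (ψ w)) Fᶜ)
    (hmaps : Set.MapsTo ψ Fᶜ Eᶜ)
    (hψ : Tendsto (fun w => ψ w - w) (cobounded ℂ) (nhds 0)) :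
    Admissible F (fun w => f (ψ w)) L c := by
  obtain ⟨hd, hb, hL, hc⟩ := hf
  have hψc := tendsto_cobounded_of_sub hψ
  refine ⟨hdiff, fun w hw => hb _ (hmaps hw), hL.comp hψc, ?_⟩
  have h1 : Tendsto (fun w => ψ w * (f (ψ w) - L)) (cobounded ℂ) (nhds c) := hc.comp hψc
  have h2 : Tendsto (fun w => (ψ w - w) * (f (ψ w) - L)) (cobounded ℂ) (nhds 0) := by
    have := hψ.mul ((hL.comp hψc).sub_const L)
    simpa using this
  have h3 := h1.sub h2
  simp only [sub_zero] at h3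
  convert h3 using 2 with w
  ring

end AnalyticCapacityAux

open AnalyticCapacityAux Metric Set in
/-- Analytic capacity is invariant under a conformal map `Φ` of `ℂ \ K` onto `ℂ \ K'`
normalized by `Φ(z) = z + O(1/z)` near infinity. -/
theorem analyticCapacity_conformal_invariance (K K' : Set ℂ)
    (hK : IsCompact K) (hK' : IsCompact K') (Φ : ℂ → ℂ)
    (hΦ : DifferentiableOn ℂ Φ Kᶜ) (hbij : Set.BijOn Φ Kᶜ K'ᶜ)
    (hnorm : Tendsto (fun z => Φ z - z) (cobounded ℂ) (nhds 0)) :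
    analyticCapacity K = analyticCapacity K' := by
  have hKo : IsOpen Kᶜ := hK.isClosed.isOpen_compl
  have hK'o : IsOpen K'ᶜ := hK'.isClosed.isOpen_compl
  have hAn : AnalyticOnNhd ℂ Φ Kᶜ := hΦ.analyticOnNhd hKo
  set ψ : ℂ → ℂ := Function.invFunOn Φ Kᶜ with hψdef
  -- basic inverse facts
  have hΦψ : ∀ w ∈ K'ᶜ, Φ (ψ w) = w ∧ ψ w ∈ Kᶜ := by
    intro w hw
    obtain ⟨z, hz, hzw⟩ := hbij.surjOn hw
    exact ⟨Function.invFunOn_eq ⟨z, hz, hzw⟩, Function.invFunOn_mem ⟨z, hz, hzw⟩⟩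
  have hmaps : Set.MapsTo ψ K'ᶜ Kᶜ := fun w hw => (hΦψ w hw).2
  have hψΦ : ∀ z ∈ Kᶜ, ψ (Φ z) = z := by
    intro z hz
    have hw := hbij.mapsTo hz
    exact hbij.injOn (hΦψ _ hw).2 hz (hΦψ _ hw).1
  -- nonconstancy
  have hnc : ∀ z ∈ Kᶜ, ¬ (∀ᶠ z' in nhds z, Φ z' = Φ z) := by
    intro z hz hev
    obtain ⟨ε, hε, hball⟩ := Metric.mem_nhds_iff.1
      (Filter.inter_mem (hev : {z' | Φ z' = Φ z} ∈ nhds z) (hKo.mem_nhds hz))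
    set z' := z + (ε/2 : ℝ)
    have hz' : z' ∈ ball z ε := by
      simp only [z', mem_ball, dist_self_add_left]
      rw [Complex.norm_real, Real.norm_eq_abs, abs_of_pos (by linarith)]
      linarith
    have h1 : Φ z' = Φ z := (hball hz').1
    have h2 : z' ∈ Kᶜ := (hball hz').2
    have : z' = z := hbij.injOn h2 hz h1
    simp only [z', add_eq_left] at this
    rw [Complex.ofReal_eq_zero] at this
    linarith
  -- open mapping
  have hopen : ∀ U, U ⊆ Kᶜ → IsOpen U → IsOpen (Φ '' U) := by
    intro U hUK hUo
    rw [isOpen_iff_mem_nhds]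
    rintro _ ⟨z, hz, rfl⟩
    rcases (hAn z (hUK hz)).eventually_constant_or_nhds_le_map_nhds with hconst | hle
    · exact absurd hconst (hnc z (hUK hz))
    · exact hle (Filter.image_mem_map (hUo.mem_nhds hz))
  -- continuity of the inverse
  have hcont : ∀ w ∈ K'ᶜ, ContinuousAt ψ w := by
    intro w hw
    obtain ⟨hΦψw, hψw⟩ := hΦψ w hw
    rcases (hAn _ hψw).eventually_constant_or_nhds_le_map_nhds with hconst | hle
    · exact absurd hconst (hnc _ hψw)
    · rw [hΦψw] at hle
      have hcongr : Filter.map (ψ ∘ Φ) (nhds (ψ w)) = nhds (ψ w) := by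
        have : (ψ ∘ Φ) =ᶠ[nhds (ψ w)] id := by
          filter_upwards [hKo.mem_nhds hψw] with z hz using hψΦ z hz
        rw [Filter.map_congr this, Filter.map_id]
      calc Filter.map ψ (nhds w) ≤ Filter.map ψ (Filter.map Φ (nhds (ψ w))) :=
            Filter.map_mono hle
        _ = Filter.map (ψ ∘ Φ) (nhds (ψ w)) := Filter.map_map
        _ = nhds (ψ w) := hcongr
  -- properness: ψ tends to infinity at infinity
  have hprop : ∀ r : ℝ, ∀ᶠ w in cobounded ℂ, w ∈ K'ᶜ ∧ r < ‖ψ w‖ := by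
    intro r
    obtain ⟨R₀, hR₀⟩ : ∃ R₀ : ℝ, ∀ z : ℂ, R₀ ≤ ‖z‖ → ‖Φ z - z‖ ≤ 1 := by
      have ev1 : ∀ᶠ z in cobounded ℂ, ‖Φ z - z‖ ≤ 1 := by
        filter_upwards [hnorm.eventually (Metric.closedBall_mem_nhds (0:ℂ) one_pos)] with z hz
        simpa [dist_zero_right] using hz
      rw [Filter.hasBasis_cobounded_norm.eventually_iff] at ev1
      obtain ⟨R₀, -, h⟩ := ev1
      exact ⟨R₀, fun z hz => h hz⟩
    obtain ⟨B, hB⟩ := hK.isBounded.exists_norm_le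
    obtain ⟨B', hB'⟩ := hK'.isBounded.exists_norm_le
    set R : ℝ := max (max r R₀) (max B 0) + 1 with hRdef
    have hrR : r ≤ R - 1 := by simp only [hRdef, add_sub_cancel_right]; exact le_max_of_le_left (le_max_left _ _)
    have hR₀R : R₀ ≤ R - 1 := by simp only [hRdef, add_sub_cancel_right]; exact le_max_of_le_left (le_max_right _ _)
    have hBR : B ≤ R - 1 := by simp only [hRdef, add_sub_cancel_right]; exact le_max_of_le_right (le_max_left _ _)
    have hR0 : 0 ≤ R - 1 := by simp only [hRdef, add_sub_cancel_right]; exact le_max_of_le_right (le_max_right _ _)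
    have hCsub : sphere (0:ℂ) (R+1) ⊆ Kᶜ := by
      intro z hz
      simp only [mem_sphere_iff_norm, sub_zero] at hz
      intro hzK
      have := hB z hzK
      rw [hz] at this; linarith
    have hΓc : IsCompact (Φ '' sphere (0:ℂ) (R+1)) :=
      (isCompact_sphere (0:ℂ) (R+1)).image_of_continuousOn (hΦ.continuousOn.mono hCsub)
    obtain ⟨MΓ, hMΓ⟩ := hΓc.isBounded.exists_norm_le
    set M : ℝ := max (max MΓ B') (R+2) with hMdef
    have hM0 : (0:ℝ) ≤ M := le_trans (by linarith) (le_max_right _ _)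
    have hRM : R + 2 ≤ M := le_max_right _ _
    have hWsub : {z : ℂ | R+1 < ‖z‖} ⊆ Kᶜ := by
      intro z hz hzK
      have := hB z hzK
      simp only [mem_setOf_eq] at hz; linarith
    set V := Φ '' (Kᶜ ∩ Metric.ball (0:ℂ) (R+1)) with hVdef
    set W := Φ '' {z : ℂ | R+1 < ‖z‖} with hWdef
    have hVo : IsOpen V := hopen _ inter_subset_left (hKo.inter isOpen_ball)
    have hWo : IsOpen W := hopen _ hWsub (isOpen_lt continuous_const continuous_norm)
    have hdisj : Disjoint V W := by
      rw [Set.disjoint_left]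
      rintro _ ⟨a, ⟨haK, haB⟩, rfl⟩ ⟨b, hb, hEq⟩
      have hab : b = a := hbij.injOn (hWsub hb) haK hEq
      rw [mem_ball, dist_zero_right] at haB
      simp only [mem_setOf_eq, hab] at hb
      linarith
    have hAsub : {w : ℂ | M < ‖w‖} ⊆ V ∪ W := by
      intro w hw
      simp only [mem_setOf_eq] at hw
      have hwK' : w ∈ K'ᶜ := by
        intro hwK
        have := hB' w hwK
        have : M < B' := lt_of_lt_of_le hw this
        have : B' ≤ M := le_trans (le_max_right _ _) (le_max_left _ _)
        linarith
      have hwim : w ∈ Φ '' Kᶜ := hbij.image_eq ▸ hwK'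
      obtain ⟨z, hz, rfl⟩ := hwim
      rcases lt_trichotomy ‖z‖ (R+1) with h | h | h
      · exact Or.inl ⟨z, ⟨hz, by rwa [mem_ball, dist_zero_right]⟩, rfl⟩
      · exfalso
        have hzs : z ∈ sphere (0:ℂ) (R+1) := by simp [mem_sphere_iff_norm, h]
        have := hMΓ _ (mem_image_of_mem Φ hzs)
        have hMΓM : MΓ ≤ M := le_trans (le_max_left _ _) (le_max_left _ _)
        linarith
      · exact Or.inr ⟨z, h, rfl⟩
    have hptW : Φ ((M+2 : ℝ) : ℂ) ∈ {w : ℂ | M < ‖w‖} ∩ W := by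
      have hznorm : ‖((M+2 : ℝ) : ℂ)‖ = M + 2 := by
        rw [Complex.norm_real, Real.norm_eq_abs, abs_of_nonneg (by linarith)]
      constructor
      · have h1 : ‖Φ ((M+2:ℝ):ℂ) - ((M+2:ℝ):ℂ)‖ ≤ 1 := hR₀ _ (by rw [hznorm]; linarith)
        have h2 := norm_sub_norm_le ((M+2:ℝ):ℂ) (Φ ((M+2:ℝ):ℂ))
        rw [norm_sub_rev] at h2
        simp only [mem_setOf_eq]
        rw [hznorm] at h2
        linarith
      · exact ⟨_, by simp only [mem_setOf_eq]; rw [hznorm]; linarith, rfl⟩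
    have hAW : {w : ℂ | M < ‖w‖} ⊆ W := by
      rcases (isPreconnected_norm_gt hM0).subset_or_subset hVo hWo hdisj hAsub with h | h
      · exact absurd (h hptW.1) (Set.disjoint_left.1 hdisj.symm hptW.2)
      · exact h
    filter_upwards [eventually_cobounded_le_norm (M+1)] with w hw
    have hwA : M < ‖w‖ := by linarith
    have hwK' : w ∈ K'ᶜ := by
      intro hwK
      have := hB' w hwK
      have hB'M : B' ≤ M := le_trans (le_max_right _ _) (le_max_left _ _)
      linarith
    obtain ⟨z, hz, hzw⟩ := hAW hwA
    have hzK : z ∈ Kᶜ := hWsub hz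
    have : ψ w = z := by rw [← hzw, hψΦ z hzK]
    rw [this]
    simp only [mem_setOf_eq] at hz
    exact ⟨hwK', by linarith⟩
  have htend : Tendsto ψ (cobounded ℂ) (cobounded ℂ) := by
    rw [← tendsto_norm_atTop_iff_cobounded]
    rw [Filter.tendsto_atTop]
    intro b
    filter_upwards [hprop b] with w hw using hw.2.le
  have hpsi_inf : Tendsto (fun w => ψ w - w) (cobounded ℂ) (nhds 0) := by
    have h1 : Tendsto (fun w => -(Φ (ψ w) - ψ w)) (cobounded ℂ) (nhds 0) := by
      simpa using (hnorm.comp htend).neg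
    apply h1.congr'
    filter_upwards [hprop 0] with w hw
    rw [(hΦψ w hw.1).1]; ring
  -- differentiability of f ∘ ψ
  have hdiffcomp : ∀ f : ℂ → ℂ, DifferentiableOn ℂ f Kᶜ →
      DifferentiableOn ℂ (fun w => f (ψ w)) K'ᶜ := by
    intro f hfd w₀ hw₀
    obtain ⟨hΦψw, hψw⟩ := hΦψ w₀ hw₀
    set z₀ := ψ w₀ with hz₀def
    have hgood : ∀ z ∈ Kᶜ, deriv Φ z ≠ 0 → DifferentiableAt ℂ (fun w => f (ψ w)) (Φ z) := by
      intro z hz hdz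
      obtain ⟨p, hp⟩ := hAn z hz
      have hs : HasStrictDerivAt Φ (deriv Φ z) z := hp.deriv ▸ hp.hasStrictDerivAt
      have hev : ∀ᶠ x in nhds z, ψ (Φ x) = x := by
        filter_upwards [hKo.mem_nhds hz] with x hx using hψΦ x hx
      have hinv : HasStrictDerivAt ψ (deriv Φ z)⁻¹ (Φ z) := hs.to_local_left_inverse hdz hev
      have hfz : DifferentiableAt ℂ f z := (hfd z hz).differentiableAt (hKo.mem_nhds hz)
      have : DifferentiableAt ℂ (f ∘ ψ) (Φ z) := by
        apply DifferentiableAt.comp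
        · rw [hψΦ z hz]; exact hfz
        · exact hinv.hasDerivAt.differentiableAt
      exact this
    have hres : DifferentiableAt ℂ (fun w => f (ψ w)) w₀ := by
      by_cases hd : deriv Φ z₀ = 0
      · have hda : AnalyticAt ℂ (deriv Φ) z₀ := hAn.deriv z₀ hψw
        rcases hda.eventually_eq_zero_or_eventually_ne_zero with h0 | hne
        · exfalso
          apply hnc z₀ hψw
          obtain ⟨ε, hε, hball⟩ := Metric.mem_nhds_iff.1
            (Filter.inter_mem (h0 : {x | deriv Φ x = 0} ∈ nhds z₀) (hKo.mem_nhds hψw))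
          have hconst : ∀ x ∈ ball z₀ ε, Φ x = Φ z₀ := by
            intro x hx
            have hcvx : Convex ℝ (ball z₀ ε) := convex_ball _ _
            apply hcvx.is_const_of_fderivWithin_eq_zero
              (hΦ.mono (fun y hy => (hball hy).2)) _ hx (mem_ball_self hε)
            intro y hy
            rw [fderivWithin_of_isOpen isOpen_ball hy]
            have hdy : deriv Φ y = 0 := (hball hy).1
            have hdiffy : DifferentiableAt ℂ Φ y :=
              (hΦ _ ((hball hy).2)).differentiableAt (hKo.mem_nhds ((hball hy).2))
            have : HasFDerivAt Φ (ContinuousLinearMap.smulRight (1 : ℂ →L[ℂ] ℂ) (deriv Φ y)) y :=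
              hdiffy.hasDerivAt.hasFDerivAt
            rw [hdy] at this
            rw [this.fderiv]; ext; simp
          filter_upwards [ball_mem_nhds z₀ hε] with x hx using hconst x hx
        · -- removable singularity argument
          have hcψ : ContinuousAt ψ w₀ := hcont w₀ hw₀
          have h1 : Tendsto ψ (nhdsWithin w₀ {w₀}ᶜ) (nhdsWithin z₀ {z₀}ᶜ) := by
            rw [tendsto_nhdsWithin_iff]
            constructor
            · exact hcψ.tendsto.mono_left nhdsWithin_le_nhds
            · filter_upwards [self_mem_nhdsWithin,
                nhdsWithin_le_nhds (hK'o.mem_nhds hw₀)] with w hwne hwK'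
              intro hψeq
              apply hwne
              have : Φ (ψ w) = Φ z₀ := by rw [hψeq]
              rw [(hΦψ w hwK').1, hΦψw] at this
              simp [this]
          have hpunct : ∀ᶠ w in nhdsWithin w₀ {w₀}ᶜ,
              DifferentiableAt ℂ (fun w => f (ψ w)) w := by
            filter_upwards [h1.eventually hne,
              nhdsWithin_le_nhds (hK'o.mem_nhds hw₀)] with w hdw hwK'
            have := hgood (ψ w) (hmaps hwK') hdw
            rwa [(hΦψ w hwK').1] at this
          have hca : ContinuousAt (fun w => f (ψ w)) w₀ := by
            have hfz : ContinuousAt f (ψ w₀) :=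
              ((hfd _ hψw).differentiableAt (hKo.mem_nhds hψw)).continuousAt
            exact ContinuousAt.comp (g := f) (f := ψ) hfz hcψ
          exact (Complex.analyticAt_of_differentiable_on_punctured_nhds_of_continuousAt
            hpunct hca).differentiableAt
      · have := hgood z₀ hψw hd
        rwa [hΦψw] at this
    exact hres.differentiableWithinAt
  -- conclude: the two admissibility sets coincide
  have hsets : {r : ℝ | ∃ f L c, Admissible K f L c ∧ r = ‖c‖} =
      {r : ℝ | ∃ f L c, Admissible K' f L c ∧ r = ‖c‖} := by
    apply Set.Subset.antisymm
    · rintro r ⟨f, L, c, hf, rfl⟩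
      exact ⟨fun w => f (ψ w), L, c,
        admissible_comp hf (hdiffcomp f hf.1) hmaps hpsi_inf, rfl⟩
    · rintro r ⟨f, L, c, hf, rfl⟩
      exact ⟨fun z => f (Φ z), L, c,
        admissible_comp hf (hf.1.comp hΦ hbij.mapsTo) hbij.mapsTo hnorm, rfl⟩
  unfold analyticCapacity
  rw [hsets]
end

section
/- For a, b ∈ ℂ with a ≠ b and nonzero u, v ∈ ℂ, define the Kerzman–Stein kernel A(a, b; u, v) := conj( u / (2πi·‖u‖·(a − b)) ) − v / (2πi·‖v‖·(b − a)). Let α ∈ ℂ and let a, b, u, v ∈ ℂ satisfy a ≠ b, a ≠ α, b ≠ α, u ≠ 0, v ≠ 0. Then the following Möbius transformation identity holds: A( 1/(a−α), 1/(b−α); −u/(a−α)², −v/(b−α)² ) · ( u·(b−α)·‖v‖ ) / ( v·(a−α)·‖b−α‖² ) = ‖u‖ · conj( A(a, b; u, v) ). -/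
open Complex

set_option maxHeartbeats 2000000

/-- The Kerzman–Stein kernel at points `a, b` with tangent vectors `u, v`:
`A(a,b;u,v) = conj( u / (2πi‖u‖(a−b)) ) − v / (2πi‖v‖(b−a))`. -/
noncomputable def ksKernel (a b u v : ℂ) : ℂ :=
  starRingEnd ℂ (u / (2 * Real.pi * Complex.I * (‖u‖ : ℂ) * (a - b))) -
    v / (2 * Real.pi * Complex.I * (‖v‖ : ℂ) * (b - a))

/-- Transformation identity for the Kerzman–Stein kernel under the Möbius map
`M(z) = 1/(z−α)` (with tangent vectors transformed by `M′(z) = −1/(z−α)²`). -/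
theorem ksKernel_mobius (α a b u v : ℂ) (hab : a ≠ b) (ha : a ≠ α) (hb : b ≠ α)
    (hu : u ≠ 0) (hv : v ≠ 0) :
    ksKernel (1 / (a - α)) (1 / (b - α)) (-u / (a - α) ^ 2) (-v / (b - α) ^ 2) *
        (u * (b - α) * (‖v‖ : ℂ)) / (v * (a - α) * ((‖b - α‖ : ℂ)) ^ 2) =
      (‖u‖ : ℂ) * starRingEnd ℂ (ksKernel a b u v) := by
  obtain ⟨A, rfl⟩ : ∃ A, a = A + α := ⟨a - α, by ring⟩
  obtain ⟨B, rfl⟩ : ∃ B, b = B + α := ⟨b - α, by ring⟩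
  have hA : A ≠ 0 := fun h => ha (by simp [h])
  have hB : B ≠ 0 := fun h => hb (by simp [h])
  have hAB : A - B ≠ 0 := fun h => hab (by
    have : A = B := sub_eq_zero.mp h
    simp [this])
  have hcA : starRingEnd ℂ A ≠ 0 := star_ne_zero.mpr hA
  have hcB : starRingEnd ℂ B ≠ 0 := star_ne_zero.mpr hB
  have hcAB : starRingEnd ℂ A - starRingEnd ℂ B ≠ 0 := by
    rw [← map_sub]; exact star_ne_zero.mpr hAB
  have hnu : (‖u‖ : ℂ) ≠ 0 := by simpa using hu
  have hnv : (‖v‖ : ℂ) ≠ 0 := by simpa using hv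
  have hnA : (‖A‖ : ℂ) ≠ 0 := by simpa using hA
  have hnB : (‖B‖ : ℂ) ≠ 0 := by simpa using hB
  have hpi : (Real.pi : ℂ) ≠ 0 := by exact_mod_cast Real.pi_ne_zero
  have hI : Complex.I ≠ 0 := Complex.I_ne_zero
  have hA2 : ((‖A‖ : ℂ)) ^ 2 = A * starRingEnd ℂ A := (Complex.mul_conj' _).symm
  have hB2 : ((‖B‖ : ℂ)) ^ 2 = B * starRingEnd ℂ B := (Complex.mul_conj' _).symm
  have hcu' : starRingEnd ℂ u = (‖u‖ : ℂ) ^ 2 / u := by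
    rw [eq_div_iff hu, mul_comm, Complex.mul_conj']
  have hcv' : starRingEnd ℂ v = (‖v‖ : ℂ) ^ 2 / v := by
    rw [eq_div_iff hv, mul_comm, Complex.mul_conj']
  have key : A + α - α = A := by ring
  have key' : B + α - α = B := by ring
  have key'' : A + α - (B + α) = A - B := by ring
  have key''' : B + α - (A + α) = B - A := by ring
  rw [key, key']
  simp only [ksKernel]
  rw [key'', key''']
  simp only [norm_div, norm_neg, norm_pow]
  push_cast
  simp only [map_div₀, map_mul, map_sub, map_neg, map_pow, map_one, map_ofNat,
    Complex.conj_ofReal, Complex.conj_I, Complex.conj_conj]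
  have hBA : B - A ≠ 0 := fun h => hAB (by
    have : B = A := sub_eq_zero.mp h
    simp [this])
  have hcBA : starRingEnd ℂ B - starRingEnd ℂ A ≠ 0 := by
    rw [← map_sub]; exact star_ne_zero.mpr hBA
  have d1 : (1 : ℂ)/A - 1/B = (B - A)/(A*B) := by
    rw [div_sub_div _ _ hA hB, one_mul, mul_one]
  have d2 : (1 : ℂ)/starRingEnd ℂ A - 1/starRingEnd ℂ B =
      (starRingEnd ℂ B - starRingEnd ℂ A)/(starRingEnd ℂ A * starRingEnd ℂ B) := by
    rw [div_sub_div _ _ hcA hcB, one_mul, mul_one]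
  have d3 : (1 : ℂ)/B - 1/A = (A - B)/(B*A) := by
    rw [div_sub_div _ _ hB hA, one_mul, mul_one]
  have d4 : (1 : ℂ)/starRingEnd ℂ B - 1/starRingEnd ℂ A =
      (starRingEnd ℂ A - starRingEnd ℂ B)/(starRingEnd ℂ B * starRingEnd ℂ A) := by
    rw [div_sub_div _ _ hcB hcA, one_mul, mul_one]
  rw [hA2, hB2, hcu', hcv']
  rw [d2, d3]
  field_simp
  have h2pi : (2 : ℂ) * (Real.pi : ℂ) * Complex.I ≠ 0 :=
    mul_ne_zero (mul_ne_zero two_ne_zero hpi) hI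
  have habsu : (‖u‖ : ℂ) ≠ 0 := by
    simpa using hnu
  have habsv : (‖v‖ : ℂ) ≠ 0 := by
    simpa using hnv
  have hD1 : u * (starRingEnd ℂ) A ^ 2 *
      (2 * (Real.pi : ℂ) * Complex.I * (‖u‖ : ℂ) *
        ((starRingEnd ℂ) B - (starRingEnd ℂ) A)) ≠ 0 :=
    mul_ne_zero (mul_ne_zero hu (pow_ne_zero 2 hcA))
      (mul_ne_zero (mul_ne_zero h2pi habsu) hcBA)
  have hD2 : B ^ 2 * (2 * (Real.pi : ℂ) * Complex.I * (‖v‖ : ℂ) * (A - B)) ≠ 0 :=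
    mul_ne_zero (pow_ne_zero 2 hB) (mul_ne_zero (mul_ne_zero h2pi habsv) hAB)
  have hE1 : 2 * (Real.pi : ℂ) * Complex.I * (‖u‖ : ℂ) * (A - B) ≠ 0 :=
    mul_ne_zero (mul_ne_zero h2pi habsu) hAB
  have hE2 : -(v * (2 * (Real.pi : ℂ) * Complex.I * (‖v‖ : ℂ) *
      ((starRingEnd ℂ) B - (starRingEnd ℂ) A))) ≠ 0 :=
    neg_ne_zero.mpr (mul_ne_zero hv (mul_ne_zero (mul_ne_zero h2pi habsv) hcBA))
  ring
end

section
/- Let m ≥ 1, α ∈ ℂ, and for j = 1,…,m let ζ_j : ℝ → ℂ be continuously differentiable and 2π-periodic with ζ_j(t) ≠ α and ζ_j′(t) ≠ 0 for all t, and with ζ_j(t) ≠ ζ_k(s) whenever (j, t mod 2π) ≠ (k, s mod 2π). Put η_j(t) := 1/(ζ_j(t) − α), so η_j′(t) = −ζ_j′(t)/(ζ_j(t) − α)². Suppose continuous functions S_j : [0, 2π] → ℂ satisfy, for every j and every t ∈ [0, 2π], the Kerzman–Stein integral equation S_j(t) + Σ_{k=1}^{m} ∫₀^{2π} A(η_j(t),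 η_k(s); η_j′(t), η_k′(s)) · S_k(s) · ‖η_k′(s)‖ ds = conj( η_j′(t) / (2πi · ‖η_j′(t)‖ · η_j(t)) ). Define ψ_j(t) := i · conj( S_j(t) · η_j′(t) / η_j(t) ) / ‖ζ_j′(t)‖. Then for every j and every t ∈ [0, 2π], ψ_j(t) + Σ_{k=1}^{m} ∫₀^{2π} A(ζ_j(t), ζ_k(s); ζ_j′(t), ζ_k′(s)) · ψ_k(s) · ‖ζ_k′(s)‖ ds = 1/(2π). -/
open Complex

set_option maxHeartbeats 1000000

/-- The Kerzman–Stein kernel is translation invariant. -/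
lemma ksKernel_sub_sub (a b u v γ : ℂ) :
    ksKernel (a - γ) (b - γ) u v = ksKernel a b u v := by
  simp [ksKernel, sub_sub_sub_cancel_right]

lemma intervalIntegral_conj (f : ℝ → ℂ) (a b : ℝ) :
    ∫ x in a..b, (starRingEnd ℂ) (f x) = (starRingEnd ℂ) (∫ x in a..b, f x) := by
  rw [intervalIntegral, intervalIntegral, integral_conj, integral_conj, map_sub]

/-- Pointwise transformation identity for the Kerzman–Stein kernel under the
Möbius map `z ↦ 1/(z − α)` (here `d`, `e` denote `w − α`, `z − α`). -/
lemma ksKernel_key (d e u v S : ℂ) (hd : d ≠ 0) (he : e ≠ 0) (hu : u ≠ 0) (hv : v ≠ 0) :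
    ksKernel d e u v *
        (Complex.I * (starRingEnd ℂ) (S * (-v / e ^ 2) / (1 / e)) / (‖v‖ : ℂ)) * (‖v‖ : ℂ) =
      Complex.I * (starRingEnd ℂ) (-u / d ^ 2 / (1 / d)) / (‖u‖ : ℂ) *
        (starRingEnd ℂ) (ksKernel (1 / d) (1 / e) (-u / d ^ 2) (-v / e ^ 2) * S *
          (‖-v / e ^ 2‖ : ℂ)) := by
  by_cases hde : d = e
  · subst hde
    simp [ksKernel]
  · have hnu : (‖u‖ : ℂ) ≠ 0 := by exact_mod_cast norm_ne_zero_iff.mpr hu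
    have hnv : (‖v‖ : ℂ) ≠ 0 := by exact_mod_cast norm_ne_zero_iff.mpr hv
    have hsub : d - e ≠ 0 := sub_ne_zero.mpr hde
    have hsub' : e - d ≠ 0 := sub_ne_zero.mpr (Ne.symm hde)
    have hideInv : (1 : ℂ) / d ≠ 1 / e := by
      simp only [one_div]
      exact fun h => hde (inv_injective h)
    have hsub2 : (1 : ℂ) / d - 1 / e ≠ 0 := sub_ne_zero.mpr hideInv
    have hsub2' : (1 : ℂ) / e - 1 / d ≠ 0 := sub_ne_zero.mpr (Ne.symm hideInv)
    have hpi : (Real.pi : ℂ) ≠ 0 := by exact_mod_cast Real.pi_ne_zero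
    have hnu2 : ((‖-u / d ^ 2‖ : ℝ) : ℂ) = (‖u‖ : ℂ) / (d * (starRingEnd ℂ) d) := by
      rw [norm_div, norm_neg, norm_pow]
      push_cast
      rw [Complex.mul_conj]
      norm_cast
      simp [Complex.normSq_eq_norm_sq]
    have hnv2 : ((‖-v / e ^ 2‖ : ℝ) : ℂ) = (‖v‖ : ℂ) / (e * (starRingEnd ℂ) e) := by
      rw [norm_div, norm_neg, norm_pow]
      push_cast
      rw [Complex.mul_conj]
      norm_cast
      simp [Complex.normSq_eq_norm_sq]
    unfold ksKernel
    rw [hnu2, hnv2]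
    simp only [map_mul, map_div₀, map_sub, map_neg, map_pow, map_one, map_ofNat,
      conj_conj, Complex.conj_I, Complex.conj_ofReal]
    set cu := (starRingEnd ℂ) u with hcu
    set cv := (starRingEnd ℂ) v with hcv
    set cd := (starRingEnd ℂ) d with hcd
    set ce := (starRingEnd ℂ) e with hce
    set cS := (starRingEnd ℂ) S with hcS
    have hcu0 : cu ≠ 0 := by simpa [hcu] using hu
    have hcv0 : cv ≠ 0 := by simpa [hcv] using hv
    have hcd0 : cd ≠ 0 := by simpa [hcd] using hd
    have hce0 : ce ≠ 0 := by simpa [hce] using he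
    have hcsub : cd - ce ≠ 0 := by
      rw [hcd, hce, ← map_sub]
      exact (map_ne_zero_iff _ (starRingEnd ℂ).injective).mpr hsub
    have hcsub' : ce - cd ≠ 0 := by
      rw [hce, hcd, ← map_sub]
      exact (map_ne_zero_iff _ (starRingEnd ℂ).injective).mpr hsub'
    have hru : u * cu = (‖u‖ : ℂ) ^ 2 := by
      rw [hcu, Complex.mul_conj]; norm_cast; simp [Complex.normSq_eq_norm_sq]
    have hrv : v * cv = (‖v‖ : ℂ) ^ 2 := by
      rw [hcv, Complex.mul_conj]; norm_cast; simp [Complex.normSq_eq_norm_sq]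
    have hau : ((‖u‖ : ℝ) : ℂ) ≠ 0 := by
      simpa using hnu
    have hav : ((‖v‖ : ℝ) : ℂ) ≠ 0 := by
      simpa using hnv
    have hrua : u * cu = ((‖u‖ : ℝ) : ℂ) ^ 2 := by
      simpa using hru
    have hrva : v * cv = ((‖v‖ : ℝ) : ℂ) ^ 2 := by
      simpa using hrv
    field_simp [hau, hav, hcu0, hcv0, hcd0, hce0, hcsub, hcsub', hsub, hsub', hpi]
    linear_combination (-((‖v‖ : ℂ) ^ 2 * (cd - ce) * cS)) * hru + ((‖u‖ : ℂ) ^ 2 * (cd - ce) * cS) * hrv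

/-- The right-hand side transforms to `1/(2π)`. -/
lemma ksKernel_key2 (d u : ℂ) (hd : d ≠ 0) (hu : u ≠ 0) :
    Complex.I * (starRingEnd ℂ) (-u / d ^ 2 / (1 / d)) / (‖u‖ : ℂ) *
      (-u / d ^ 2 / (2 * Real.pi * Complex.I * ((‖-u / d ^ 2‖ : ℝ) : ℂ) * (1 / d))) =
    1 / (2 * Real.pi) := by
  have hnu : (‖u‖ : ℂ) ≠ 0 := by exact_mod_cast norm_ne_zero_iff.mpr hu
  have hpi : (Real.pi : ℂ) ≠ 0 := by exact_mod_cast Real.pi_ne_zero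
  have hn2 : ((‖-u / d ^ 2‖ : ℝ) : ℂ) = (‖u‖ : ℂ) / (d * (starRingEnd ℂ) d) := by
    rw [norm_div, norm_neg, norm_pow]
    push_cast
    rw [Complex.mul_conj]
    norm_cast
    simp [Complex.normSq_eq_norm_sq]
  rw [hn2]
  simp only [map_div₀, map_neg, map_pow, map_one]
  set cu := (starRingEnd ℂ) u with hcu
  set cd := (starRingEnd ℂ) d with hcd
  have hcu0 : cu ≠ 0 := by simpa [hcu] using hu
  have hcd0 : cd ≠ 0 := by simpa [hcd] using hd
  have hau : ((‖u‖ : ℝ) : ℂ) ≠ 0 := by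
    simpa using hnu
  have hrua : u * cu = ((‖u‖ : ℝ) : ℂ) ^ 2 := by
    rw [hcu, Complex.mul_conj]; norm_cast; simp [Complex.normSq_eq_norm_sq]
  field_simp [hau, hcu0, hcd0, hpi]
  linear_combination hrua

/-- Transformation of the Kerzman–Stein integral equation from the image boundary
`η = M ∘ ζ` (under the Möbius map `M(z) = 1/(z−α)`) back to the original boundary `ζ`:
if the boundary values `S j` of the Szegő kernel satisfy the Kerzman–Stein equation on
the image curves `η j`, then `ψ j t = i·conj(S j t · η′ j t / η j t)/‖ζ′ j t‖` satisfies
the modified equation on the original curves, with right-hand side `1/(2π)`. -/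
theorem ksKernel_integral_equation_transform (m : ℕ) (hm : 1 ≤ m) (α : ℂ)
    (ζ : Fin m → ℝ → ℂ)
    (hC1 : ∀ j, ContDiff ℝ 1 (ζ j))
    (hper : ∀ j, Function.Periodic (ζ j) (2 * Real.pi))
    (hα : ∀ j t, ζ j t ≠ α)
    (hreg : ∀ j t, deriv (ζ j) t ≠ 0)
    (hinj : ∀ j k t s, ζ j t = ζ k s → j = k ∧ ∃ n : ℤ, t - s = n * (2 * Real.pi))
    (η η' : Fin m → ℝ → ℂ)
    (hη : ∀ j t, η j t = 1 / (ζ j t - α))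
    (hη' : ∀ j t, η' j t = -(deriv (ζ j) t) / (ζ j t - α) ^ 2)
    (S : Fin m → ℝ → ℂ)
    (hScont : ∀ j, ContinuousOn (S j) (Set.Icc 0 (2 * Real.pi)))
    (hS : ∀ j, ∀ t ∈ Set.Icc (0 : ℝ) (2 * Real.pi),
      S j t + ∑ k, ∫ s in (0 : ℝ)..(2 * Real.pi),
          ksKernel (η j t) (η k s) (η' j t) (η' k s) * S k s * (‖η' k s‖ : ℂ)
        = starRingEnd ℂ (η' j t /
            (2 * Real.pi * Complex.I * (‖η' j t‖ : ℂ) * η j t)))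
    (ψ : Fin m → ℝ → ℂ)
    (hψ : ∀ j t, ψ j t =
      Complex.I * starRingEnd ℂ (S j t * η' j t / η j t) / (‖deriv (ζ j) t‖ : ℂ)) :
    ∀ j, ∀ t ∈ Set.Icc (0 : ℝ) (2 * Real.pi),
      ψ j t + ∑ k, ∫ s in (0 : ℝ)..(2 * Real.pi),
          ksKernel (ζ j t) (ζ k s) (deriv (ζ j) t) (deriv (ζ k) s) * ψ k s *
            (‖deriv (ζ k) s‖ : ℂ)
        = 1 / (2 * Real.pi) := by
  intro j t ht
  set c : ℂ := Complex.I * starRingEnd ℂ (η' j t / η j t) / (‖deriv (ζ j) t‖ : ℂ) with hc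
  have hkey : ∀ k s, ksKernel (ζ j t) (ζ k s) (deriv (ζ j) t) (deriv (ζ k) s) * ψ k s *
      (‖deriv (ζ k) s‖ : ℂ) =
      c * starRingEnd ℂ (ksKernel (η j t) (η k s) (η' j t) (η' k s) * S k s *
        (‖η' k s‖ : ℂ)) := by
    intro k s
    rw [hψ k s, hc, hη j t, hη k s, hη' j t, hη' k s,
      ← ksKernel_sub_sub (ζ j t) (ζ k s) (deriv (ζ j) t) (deriv (ζ k) s) α]
    exact ksKernel_key (ζ j t - α) (ζ k s - α) (deriv (ζ j) t) (deriv (ζ k) s) (S k s)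
      (sub_ne_zero.mpr (hα j t)) (sub_ne_zero.mpr (hα k s)) (hreg j t) (hreg k s)
  have hint : ∀ k, (∫ s in (0 : ℝ)..(2 * Real.pi),
      ksKernel (ζ j t) (ζ k s) (deriv (ζ j) t) (deriv (ζ k) s) * ψ k s *
        (‖deriv (ζ k) s‖ : ℂ)) =
      c * starRingEnd ℂ (∫ s in (0 : ℝ)..(2 * Real.pi),
        ksKernel (η j t) (η k s) (η' j t) (η' k s) * S k s * (‖η' k s‖ : ℂ)) := by
    intro k
    rw [intervalIntegral.integral_congr (g := fun s =>
        c * starRingEnd ℂ (ksKernel (η j t) (η k s) (η' j t) (η' k s) * S k s *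
          (‖η' k s‖ : ℂ))) (fun s _ => hkey k s),
      intervalIntegral.integral_const_mul, intervalIntegral_conj]
  have hpsij : ψ j t = c * starRingEnd ℂ (S j t) := by
    rw [hψ j t, hc]
    simp only [map_mul, map_div₀]
    ring
  calc ψ j t + ∑ k, ∫ s in (0 : ℝ)..(2 * Real.pi),
        ksKernel (ζ j t) (ζ k s) (deriv (ζ j) t) (deriv (ζ k) s) * ψ k s *
          (‖deriv (ζ k) s‖ : ℂ)
      = c * starRingEnd ℂ (S j t + ∑ k, ∫ s in (0 : ℝ)..(2 * Real.pi),
          ksKernel (η j t) (η k s) (η' j t) (η' k s) * S k s * (‖η' k s‖ : ℂ)) := by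
        rw [hpsij, map_add, mul_add]
        congr 1
        rw [Finset.sum_congr rfl (fun k _ => hint k), ← Finset.mul_sum, map_sum]
    _ = c * (η' j t / (2 * Real.pi * Complex.I * (‖η' j t‖ : ℂ) * η j t)) := by
        rw [hS j t ht, conj_conj]
    _ = 1 / (2 * Real.pi) := by
        rw [hc, hη j t, hη' j t]
        exact ksKernel_key2 (ζ j t - α) (deriv (ζ j) t)
          (sub_ne_zero.mpr (hα j t)) (hreg j t)
end

section
/- Let m ≥ 1 and let closedBall(c_1, r_1), …, closedBall(c_m, r_m) ⊆ ℂ be pairwise disjoint closed disks with r_j > 0, and set E := ⋃_{j=1}^m closedBall(c_j, r_j). Then for every function f : ℂ → ℂ that is admissible for E, one has ‖f′(∞)‖ ≤ r_1 + ⋯ + r_m; consequently γ(E) ≤ Σ_{j=1}^m r_j = Σ_{j=1}^m γ(closedBall(c_j, r_j)). -/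
open Filter Bornology

open Metric Set Complex

noncomputable def cext (g : ℂ → ℂ) (c : ℂ) (ρ : ℝ) (z : ℂ) : ℂ :=
  (2 * Real.pi * Complex.I)⁻¹ * ∮ w in C(c, ρ), (w - z)⁻¹ * g w

lemma ev_cobounded (M : ℝ) : ∀ᶠ z : ℂ in cobounded ℂ, M ≤ ‖z‖ :=
  tendsto_norm_cobounded_atTop.eventually_ge_atTop M

lemma tendsto_zero_of_bound {f : ℂ → ℂ} (K M : ℝ)
    (h : ∀ᶠ z : ℂ in cobounded ℂ, ‖f z‖ ≤ K / (‖z‖ - M)) :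
    Tendsto f (cobounded ℂ) (nhds 0) := by
  apply squeeze_zero_norm' h
  have h1 : Tendsto (fun z : ℂ => ‖z‖ - M) (cobounded ℂ) atTop := by
    simpa [sub_eq_add_neg] using
      tendsto_atTop_add_const_right (cobounded ℂ) (-M) tendsto_norm_cobounded_atTop
  exact Tendsto.div_atTop tendsto_const_nhds h1

lemma cext_differentiableOn_ball {g : ℂ → ℂ} {c : ℂ} {ρ : ℝ} (hρ : 0 < ρ)
    (hg : CircleIntegrable g c ρ) : DifferentiableOn ℂ (cext g c ρ) (ball c ρ) := by
  set R : NNReal := ⟨ρ, hρ.le⟩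
  have hg' : CircleIntegrable g c (R : ℝ) := hg
  have := (hasFPowerSeriesOn_cauchy_integral hg' (by exact_mod_cast hρ)).differentiableOn
  rw [Metric.emetric_ball_nnreal] at this
  refine this.congr fun z hz => ?_
  simp only [cext, smul_eq_mul]
  rfl

lemma sphere_dist_ge {c z w : ℂ} {ρ δ : ℝ} (hw : w ∈ sphere c ρ)
    (hz : ρ + δ ≤ dist z c) : δ ≤ ‖w - z‖ := by
  have hw' : dist w c = ρ := hw
  have := dist_triangle z w c
  have h2 : dist w z = ‖w - z‖ := by rw [dist_eq_norm]
  have h3 : dist z w = dist w z := dist_comm _ _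
  linarith [dist_triangle z w c]

lemma hasDerivAt_int_exterior {g : ℂ → ℂ} {c : ℂ} {ρ : ℝ} (hρ : 0 ≤ ρ)
    (hg : ContinuousOn g (sphere c ρ)) {z₀ : ℂ} (hz₀ : ρ < dist z₀ c) :
    HasDerivAt (fun z => ∮ w in C(c, ρ), (w - z)⁻¹ * g w)
      (∮ w in C(c, ρ), ((w - z₀) ^ 2)⁻¹ * g w) z₀ := by
  obtain ⟨C, hC⟩ := (isCompact_sphere c ρ).exists_bound_of_continuousOn hg
  set δ : ℝ := (dist z₀ c - ρ) / 2 with hδdef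
  have hδ : 0 < δ := by
    have := sub_pos.2 hz₀
    positivity
  have hdist : ∀ z ∈ ball z₀ δ, ρ + δ ≤ dist z c := by
    intro z hz
    have h1 : dist z z₀ < δ := mem_ball.1 hz
    have h2 := dist_triangle z₀ z c
    have h3 : dist z₀ z = dist z z₀ := dist_comm _ _
    have h4 : dist z₀ c = ρ + 2 * δ := by rw [hδdef]; ring
    linarith
  have hball : ∀ z ∈ ball z₀ δ, ∀ w ∈ sphere c ρ, δ ≤ ‖w - z‖ := fun z hz w hw =>
    sphere_dist_ge hw (hdist z hz)
  have hz₀b : z₀ ∈ ball z₀ δ := mem_ball_self hδ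
  have hne : ∀ z ∈ ball z₀ δ, ∀ w ∈ sphere c ρ, w - z ≠ 0 := by
    intro z hz w hw
    intro h
    have := hball z hz w hw
    rw [h, norm_zero] at this
    linarith
  have hker : ∀ z ∈ ball z₀ δ, ContinuousOn (fun w => (w - z)⁻¹) (sphere c ρ) := by
    intro z hz
    exact (continuousOn_id.sub continuousOn_const).inv₀ (hne z hz)
  have k1 : ∀ z ∈ ball z₀ δ, CircleIntegrable (fun w => (w - z)⁻¹ * g w) c ρ := by
    intro z hz
    exact ((hker z hz).mul hg).circleIntegrable hρ
  have k3 : CircleIntegrable (fun w => ((w - z₀) ^ 2)⁻¹ * g w) c ρ := by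
    refine (ContinuousOn.mul ?_ hg).circleIntegrable hρ
    exact (((continuousOn_id.sub continuousOn_const).pow 2).inv₀
      (fun w hw => pow_ne_zero 2 (hne z₀ hz₀b w hw)))
  rw [hasDerivAt_iff_isLittleO]
  refine Asymptotics.IsBigO.trans_isLittleO ?_ (Asymptotics.isLittleO_pow_sub_sub z₀ one_lt_two)
  rw [Asymptotics.isBigO_iff]
  refine ⟨2 * Real.pi * ρ * (δ⁻¹ * (δ⁻¹ * δ⁻¹ * C)), ?_⟩
  filter_upwards [ball_mem_nhds z₀ hδ] with z hz
  have k1z := k1 z hz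
  have k1z₀ := k1 z₀ hz₀b
  have k4 : CircleIntegrable (fun w => (w - z)⁻¹ * (((w - z₀) ^ 2)⁻¹ * g w)) c ρ := by
    refine (ContinuousOn.mul (hker z hz) (ContinuousOn.mul ?_ hg)).circleIntegrable hρ
    exact ((continuousOn_id.sub continuousOn_const).pow 2).inv₀
      (fun w hw => pow_ne_zero 2 (hne z₀ hz₀b w hw))
  have hcont2 : ContinuousOn (fun w => ((w - z₀) ^ 2)⁻¹) (sphere c ρ) :=
    ((continuousOn_id.sub continuousOn_const).pow 2).inv₀
      (fun w hw => pow_ne_zero 2 (hne z₀ hz₀b w hw))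
  have kCM : CircleIntegrable (fun w => (z - z₀) * (((w - z₀) ^ 2)⁻¹ * g w)) c ρ :=
    (continuousOn_const.mul (hcont2.mul hg)).circleIntegrable hρ
  have kS : CircleIntegrable (fun w => (w - z)⁻¹ * g w - (w - z₀)⁻¹ * g w) c ρ :=
    (((hker z hz).mul hg).sub ((hker z₀ hz₀b).mul hg)).circleIntegrable hρ
  have step1 : (∮ w in C(c, ρ), ((w - z)⁻¹ * g w - (w - z₀)⁻¹ * g w
          - (z - z₀) * (((w - z₀) ^ 2)⁻¹ * g w)))
      = (∮ w in C(c, ρ), (w - z)⁻¹ * g w) - (∮ w in C(c, ρ), (w - z₀)⁻¹ * g w)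
      - (z - z₀) * (∮ w in C(c, ρ), ((w - z₀) ^ 2)⁻¹ * g w) := by
    rw [circleIntegral.integral_sub kS kCM,
      circleIntegral.integral_sub k1z k1z₀, circleIntegral.integral_const_mul]
  have step2 : (∮ w in C(c, ρ), ((w - z)⁻¹ * g w - (w - z₀)⁻¹ * g w
          - (z - z₀) * (((w - z₀) ^ 2)⁻¹ * g w)))
      = (z - z₀) ^ 2 * ∮ w in C(c, ρ), (w - z)⁻¹ * (((w - z₀) ^ 2)⁻¹ * g w) := by
    rw [← circleIntegral.integral_const_mul]
    refine circleIntegral.integral_congr hρ (fun w hw => ?_)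
    have h1 : w - z ≠ 0 := hne z hz w hw
    have h2 : w - z₀ ≠ 0 := hne z₀ hz₀b w hw
    field_simp
    ring
  have step3 : ‖∮ w in C(c, ρ), (w - z)⁻¹ * (((w - z₀) ^ 2)⁻¹ * g w)‖
      ≤ 2 * Real.pi * ρ * (δ⁻¹ * (δ⁻¹ * δ⁻¹ * C)) := by
    refine circleIntegral.norm_integral_le_of_norm_le_const hρ (fun w hw => ?_)
    have h1 := hball z hz w hw
    have h2 := hball z₀ hz₀b w hw
    have hCg := hC w hw
    rw [norm_mul, norm_inv, norm_mul, norm_inv, norm_pow]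
    have e1 : ‖w - z‖⁻¹ ≤ δ⁻¹ := inv_anti₀ hδ h1
    have e2 : ‖w - z₀‖ ^ 2 ≥ δ * δ := by nlinarith [norm_nonneg (w - z₀)]
    have e3 : (‖w - z₀‖ ^ 2)⁻¹ ≤ δ⁻¹ * δ⁻¹ := by
      rw [← mul_inv]
      exact inv_anti₀ (by positivity) e2
    have hg0 : 0 ≤ ‖g w‖ := norm_nonneg _
    have : (‖w - z₀‖ ^ 2)⁻¹ * ‖g w‖ ≤ δ⁻¹ * δ⁻¹ * C := by
      apply mul_le_mul e3 hCg hg0 (by positivity)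
    refine mul_le_mul e1 this (by positivity) (by positivity)
  have smul_eq : (z - z₀) • (∮ w in C(c, ρ), ((w - z₀) ^ 2)⁻¹ * g w)
      = (z - z₀) * (∮ w in C(c, ρ), ((w - z₀) ^ 2)⁻¹ * g w) := by rw [smul_eq_mul]
  calc ‖(∮ w in C(c, ρ), (w - z)⁻¹ * g w) - (∮ w in C(c, ρ), (w - z₀)⁻¹ * g w)
      - (z - z₀) • (∮ w in C(c, ρ), ((w - z₀) ^ 2)⁻¹ * g w)‖
      = ‖z - z₀‖ ^ 2 * ‖∮ w in C(c, ρ), (w - z)⁻¹ * (((w - z₀) ^ 2)⁻¹ * g w)‖ := by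
        rw [smul_eq, ← step1, step2, norm_mul, norm_pow]
    _ ≤ ‖z - z₀‖ ^ 2 * (2 * Real.pi * ρ * (δ⁻¹ * (δ⁻¹ * δ⁻¹ * C))) := by
        apply mul_le_mul_of_nonneg_left step3 (by positivity)
    _ ≤ 2 * Real.pi * ρ * (δ⁻¹ * (δ⁻¹ * δ⁻¹ * C)) * ‖‖z - z₀‖ ^ 2‖ := by
        rw [norm_pow, norm_norm, mul_comm]

lemma cext_differentiableAt_exterior {g : ℂ → ℂ} {c : ℂ} {ρ : ℝ} (hρ : 0 ≤ ρ)
    (hg : ContinuousOn g (sphere c ρ)) {z₀ : ℂ} (hz₀ : ρ < dist z₀ c) :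
    DifferentiableAt ℂ (cext g c ρ) z₀ :=
  DifferentiableAt.const_mul (hasDerivAt_int_exterior hρ hg hz₀).differentiableAt _

lemma circleIntegral_cext_eq_zero {g : ℂ → ℂ} {c : ℂ} {ρ : ℝ} (hρ : 0 ≤ ρ)
    (hg : ContinuousOn g (sphere c ρ)) {c' : ℂ} {ρ' : ℝ} (hρ' : 0 ≤ ρ')
    (hfar : ∀ z ∈ closedBall c' ρ', ρ < dist z c) :
    (∮ z in C(c', ρ'), cext g c ρ z) = 0 := by
  refine Complex.circleIntegral_eq_zero_of_differentiable_on_off_countable hρ'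
    Set.countable_empty ?_ ?_
  · intro z hz
    exact (cext_differentiableAt_exterior hρ hg (hfar z hz)).continuousAt.continuousWithinAt
  · intro z hz
    exact cext_differentiableAt_exterior hρ hg (hfar z (ball_subset_closedBall hz.1))

lemma sphere_norm_le {c w : ℂ} {ρ : ℝ} (hw : w ∈ sphere c ρ) : ‖w‖ ≤ ‖c‖ + ρ := by
  have h1 : ‖w - c‖ = ρ := by rw [← dist_eq_norm]; exact hw
  calc ‖w‖ = ‖w - c + c‖ := by ring_nf
    _ ≤ ‖w - c‖ + ‖c‖ := norm_add_le _ _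
    _ = ‖c‖ + ρ := by rw [h1]; ring

lemma tendsto_z_cext {g : ℂ → ℂ} {c : ℂ} {ρ : ℝ} (hρ : 0 ≤ ρ)
    (hg : ContinuousOn g (sphere c ρ)) :
    Tendsto (fun z => z * cext g c ρ z) (cobounded ℂ)
      (nhds (-((2 * Real.pi * Complex.I)⁻¹ * ∮ w in C(c, ρ), g w))) := by
  obtain ⟨C, hC⟩ := (isCompact_sphere c ρ).exists_bound_of_continuousOn hg
  have hsph : (c + ρ) ∈ sphere c ρ := by
    simp [Complex.dist_eq, Complex.norm_real, _root_.abs_of_nonneg hρ]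
  have hC0 : 0 ≤ C := le_trans (norm_nonneg _) (hC _ hsph)
  set M : ℝ := ‖c‖ + ρ with hM
  have hM0 : 0 ≤ M := by positivity
  set A : ℂ := -((2 * Real.pi * Complex.I)⁻¹ * ∮ w in C(c, ρ), g w) with hA
  rw [← tendsto_sub_nhds_zero_iff]
  apply tendsto_zero_of_bound (ρ * (M * C)) M
  filter_upwards [ev_cobounded (M + 1)] with z hz
  have hzM : M + 1 ≤ ‖z‖ := hz
  have hzM' : 0 < ‖z‖ - M := by linarith
  have hwz : ∀ w ∈ sphere c ρ, ‖z‖ - M ≤ ‖w - z‖ := by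
    intro w hw
    have h1 : ‖w‖ ≤ M := sphere_norm_le hw
    calc ‖z‖ - M ≤ ‖z‖ - ‖w‖ := by linarith
      _ ≤ ‖z - w‖ := by
          have := norm_sub_norm_le z w
          linarith
      _ = ‖w - z‖ := norm_sub_rev _ _
  have hne : ∀ w ∈ sphere c ρ, w - z ≠ 0 := by
    intro w hw h
    have := hwz w hw
    rw [h, norm_zero] at this
    linarith
  have hkercont : ContinuousOn (fun w => (w - z)⁻¹ * g w) (sphere c ρ) :=
    ((continuousOn_id.sub continuousOn_const).inv₀ (hne)).mul hg
  have k1 : CircleIntegrable (fun w => (w - z)⁻¹ * g w) c ρ := hkercont.circleIntegrable hρ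
  have kg : CircleIntegrable g c ρ := hg.circleIntegrable hρ
  have key : z * cext g c ρ z - A
      = (2 * Real.pi * Complex.I)⁻¹ * ∮ w in C(c, ρ), (w * (w - z)⁻¹ * g w) := by
    have e0 : z * cext g c ρ z = (2 * Real.pi * Complex.I)⁻¹
        * ∮ w in C(c, ρ), z * ((w - z)⁻¹ * g w) := by
      rw [cext, circleIntegral.integral_const_mul]
      ring
    have kPg : CircleIntegrable (fun w => z * ((w - z)⁻¹ * g w) + g w) c ρ :=
      ((continuousOn_const.mul hkercont).add hg).circleIntegrable hρ
    have hsplit := circleIntegral.integral_sub kPg kg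
    have e : (∮ w in C(c, ρ), (z * ((w - z)⁻¹ * g w) + g w - g w))
        = ∮ w in C(c, ρ), z * ((w - z)⁻¹ * g w) :=
      circleIntegral.integral_congr hρ (fun w hw => by ring)
    have e1 : (∮ w in C(c, ρ), z * ((w - z)⁻¹ * g w)) + (∮ w in C(c, ρ), g w)
        = ∮ w in C(c, ρ), (z * ((w - z)⁻¹ * g w) + g w) := by
      rw [← e, hsplit]
      ring
    have e2 : (∮ w in C(c, ρ), (z * ((w - z)⁻¹ * g w) + g w))
        = ∮ w in C(c, ρ), (w * (w - z)⁻¹ * g w) := by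
      refine circleIntegral.integral_congr hρ (fun w hw => ?_)
      have h1 : w - z ≠ 0 := hne w hw
      field_simp
      ring
    rw [e0, hA]
    rw [sub_neg_eq_add, ← mul_add, e1, e2]
  rw [key]
  have hnorm : ‖(2 * Real.pi * Complex.I)⁻¹‖ = (2 * Real.pi)⁻¹ := by
    simp [Real.pi_pos.le]
  have hbound : ‖∮ w in C(c, ρ), (w * (w - z)⁻¹ * g w)‖
      ≤ 2 * Real.pi * ρ * (M * (‖z‖ - M)⁻¹ * C) := by
    refine circleIntegral.norm_integral_le_of_norm_le_const hρ (fun w hw => ?_)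
    have h1 : ‖w‖ ≤ M := sphere_norm_le hw
    have h2 := hwz w hw
    have h3 : ‖(w - z)⁻¹‖ ≤ (‖z‖ - M)⁻¹ := by
      rw [norm_inv]
      exact inv_anti₀ hzM' h2
    rw [norm_mul, norm_mul]
    refine mul_le_mul (mul_le_mul h1 h3 (norm_nonneg _) hM0) (hC w hw) (norm_nonneg _) ?_
    positivity
  rw [norm_mul, hnorm]
  have h2π : (2 * Real.pi)⁻¹ * (2 * Real.pi) = 1 := inv_mul_cancel₀ (by positivity)
  calc (2 * Real.pi)⁻¹ * ‖∮ w in C(c, ρ), (w * (w - z)⁻¹ * g w)‖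
      ≤ (2 * Real.pi)⁻¹ * (2 * Real.pi * ρ * (M * (‖z‖ - M)⁻¹ * C)) := by
        apply mul_le_mul_of_nonneg_left hbound
        positivity
    _ = ((2 * Real.pi)⁻¹ * (2 * Real.pi)) * (ρ * (M * (‖z‖ - M)⁻¹ * C)) := by ring
    _ = ρ * (M * (‖z‖ - M)⁻¹ * C) := by rw [h2π, one_mul]
    _ = ρ * (M * C) / (‖z‖ - M) := by rw [div_eq_mul_inv]; ring

lemma cext_annulus_eq {g : ℂ → ℂ} {c : ℂ} {ρ₀ ρ₁ : ℝ} (h0 : 0 < ρ₀) (h01 : ρ₀ ≤ ρ₁)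
    (hc : ContinuousOn g (closedBall c ρ₁ \ ball c ρ₀))
    (hd : ∀ x ∈ ball c ρ₁ \ closedBall c ρ₀, DifferentiableAt ℂ g x)
    {z : ℂ} (hz : z ∈ ball c ρ₁ \ closedBall c ρ₀) :
    cext g c ρ₁ z = g z + cext g c ρ₀ z := by
  have hz1 : dist z c < ρ₁ := mem_ball.1 hz.1
  have hz0 : ρ₀ < dist z c := by
    have := hz.2
    simpa [mem_closedBall, not_le] using this
  -- the annulus is open and contains z, and is contained in the closed annulus
  have hopen : IsOpen (ball c ρ₁ \ closedBall c ρ₀) := isOpen_ball.sdiff Metric.isClosed_closedBall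
  have hsub : ball c ρ₁ \ closedBall c ρ₀ ⊆ closedBall c ρ₁ \ ball c ρ₀ := fun x hx =>
    ⟨ball_subset_closedBall hx.1, fun h => hx.2 (ball_subset_closedBall h)⟩
  have hmem : closedBall c ρ₁ \ ball c ρ₀ ∈ nhds z :=
    mem_nhds_iff.2 ⟨_, hsub, hopen, hz⟩
  -- dslope
  set k : ℂ → ℂ := dslope g z with hk
  have hkc : ContinuousOn k (closedBall c ρ₁ \ ball c ρ₀) :=
    (continuousOn_dslope hmem).2 ⟨hc, hd z hz⟩
  have hkd : ∀ x ∈ (ball c ρ₁ \ closedBall c ρ₀) \ ({z} : Set ℂ), DifferentiableAt ℂ k x := by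
    intro x hx
    have hne : x ≠ z := by simpa using hx.2
    exact (differentiableAt_dslope_of_ne hne).2 (hd x hx.1)
  have hdef : (∮ w in C(c, ρ₁), k w) = ∮ w in C(c, ρ₀), k w :=
    Complex.circleIntegral_eq_of_differentiable_on_annulus_off_countable h0 h01
      (Set.countable_singleton z) hkc hkd
  -- spheres avoid z
  have hne1 : ∀ w ∈ sphere c ρ₁, w ≠ z := by
    intro w hw h
    have : dist w c = ρ₁ := hw
    rw [h] at this
    linarith
  have hne0 : ∀ w ∈ sphere c ρ₀, w ≠ z := by
    intro w hw h
    have : dist w c = ρ₀ := hw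
    rw [h] at this
    linarith
  have hsph1 : sphere c ρ₁ ⊆ closedBall c ρ₁ \ ball c ρ₀ := by
    intro w hw
    have : dist w c = ρ₁ := hw
    constructor
    · exact mem_closedBall.2 this.le
    · rw [mem_ball]; push_neg; rw [this]; linarith
  have hsph0 : sphere c ρ₀ ⊆ closedBall c ρ₁ \ ball c ρ₀ := by
    intro w hw
    have : dist w c = ρ₀ := hw
    constructor
    · exact mem_closedBall.2 (this.le.trans h01)
    · rw [mem_ball]; push_neg; rw [this]
  -- expand k on spheres
  have hexp : ∀ t : ℝ, 0 < t → (∀ w ∈ sphere c t, w ≠ z) → sphere c t ⊆ closedBall c ρ₁ \ ball c ρ₀ →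
      (∮ w in C(c, t), k w) = (∮ w in C(c, t), (w - z)⁻¹ * g w)
        - (∮ w in C(c, t), (w - z)⁻¹) * g z := by
    intro t ht hn hs
    have hkercont : ContinuousOn (fun w => (w - z)⁻¹) (sphere c t) :=
      (continuousOn_id.sub continuousOn_const).inv₀
        (fun w hw => sub_ne_zero.2 (hn w hw))
    have kint1 : CircleIntegrable (fun w => (w - z)⁻¹ * g w) c t :=
      (hkercont.mul (hc.mono hs)).circleIntegrable ht.le
    have kint2 : CircleIntegrable (fun w => (w - z)⁻¹ * g z) c t :=
      (hkercont.mul continuousOn_const).circleIntegrable ht.le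
    have e1 : (∮ w in C(c, t), k w)
        = ∮ w in C(c, t), ((w - z)⁻¹ * g w - (w - z)⁻¹ * g z) := by
      refine circleIntegral.integral_congr ht.le (fun w hw => ?_)
      rw [hk, dslope_of_ne g (hn w hw), slope_def_field]
      field_simp
    rw [e1, circleIntegral.integral_sub kint1 kint2]
    congr 1
    have := circleIntegral.integral_smul_const (fun w => (w - z)⁻¹) (g z) c t
    simpa [smul_eq_mul] using this
  have houter := hexp ρ₁ (h0.trans_le h01) hne1 hsph1
  have hinner := hexp ρ₀ h0 hne0 hsph0
  have hval1 : (∮ w in C(c, ρ₁), (w - z)⁻¹) = 2 * Real.pi * Complex.I :=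
    circleIntegral.integral_sub_inv_of_mem_ball (mem_ball.2 hz1)
  have hval0 : (∮ w in C(c, ρ₀), (w - z)⁻¹) = 0 := by
    refine Complex.circleIntegral_eq_zero_of_differentiable_on_off_countable h0.le
      Set.countable_empty ?_ ?_
    · refine ContinuousOn.inv₀ (continuousOn_id.sub continuousOn_const) ?_
      intro w hw
      refine sub_ne_zero.2 ?_
      intro h
      have : dist w c ≤ ρ₀ := mem_closedBall.1 hw
      rw [h] at this
      linarith
    · intro w hw
      refine DifferentiableAt.inv (differentiableAt_id.sub_const z) ?_
      refine sub_ne_zero.2 ?_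
      intro h
      have : dist w c < ρ₀ := mem_ball.1 hw.1
      rw [h] at this
      linarith
  -- combine
  have hcomb : (∮ w in C(c, ρ₁), (w - z)⁻¹ * g w)
      = 2 * Real.pi * Complex.I * g z + ∮ w in C(c, ρ₀), (w - z)⁻¹ * g w := by
    have := hdef
    rw [houter, hinner, hval1, hval0] at this
    linear_combination this
  rw [cext, cext, hcomb]
  have h2πI : (2 * (Real.pi : ℂ) * Complex.I) ≠ 0 := Complex.two_pi_I_ne_zero
  field_simp

lemma circleIntegral_add {f₁ f₂ : ℂ → ℂ} {c : ℂ} {R : ℝ} (h₁ : CircleIntegrable f₁ c R)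
    (h₂ : CircleIntegrable f₂ c R) :
    (∮ z in C(c, R), (f₁ z + f₂ z)) = (∮ z in C(c, R), f₁ z) + ∮ z in C(c, R), f₂ z := by
  have hs := circleIntegral.integral_sub (h₁.add h₂) h₂
  simp only [Pi.add_apply, add_sub_cancel_right] at hs
  rw [hs]
  ring

lemma key_induction (m : ℕ) : ∀ (c : Fin m → ℂ) (ρ : Fin m → ℝ), (∀ j, 0 < ρ j) →
    (Pairwise fun j k => Disjoint (closedBall (c j) (ρ j)) (closedBall (c k) (ρ k))) →
    ∀ (g : ℂ → ℂ) (a : ℂ), DifferentiableOn ℂ g (⋃ j, ball (c j) (ρ j))ᶜ →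
    Tendsto (fun z => z * g z) (cobounded ℂ) (nhds a) →
    2 * (Real.pi : ℂ) * Complex.I * a = ∑ j, ∮ z in C(c j, ρ j), g z := by
  induction m with
  | zero =>
    intro c ρ hρ hdisj g a hg hzg
    have hU : ((⋃ j : Fin 0, ball (c j) (ρ j)) : Set ℂ)ᶜ = univ := by simp
    rw [hU] at hg
    have hgd : Differentiable ℂ g := differentiableOn_univ.mp hg
    have hg0 : Tendsto g (cobounded ℂ) (nhds 0) := by
      have h1 : Tendsto (fun z : ℂ => z * g z * z⁻¹) (cobounded ℂ) (nhds (a * 0)) :=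
        hzg.mul tendsto_inv₀_cobounded
      rw [mul_zero] at h1
      refine h1.congr' ?_
      filter_upwards [ev_cobounded 1] with z hz
      have hz0 : z ≠ 0 := by intro h; rw [h, norm_zero] at hz; linarith
      field_simp
    have hev : ∀ᶠ z : ℂ in cobounded ℂ, ‖g z‖ < 1 := by
      have h2 := hg0.norm
      rw [norm_zero] at h2
      exact h2.eventually_lt_const one_pos
    obtain ⟨M, -, hM⟩ := (Filter.hasBasis_cobounded_norm.eventually_iff).1 hev
    obtain ⟨C, hC⟩ := (isCompact_closedBall (0 : ℂ) M).exists_bound_of_continuousOn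
      hgd.continuous.continuousOn
    have hb : IsBounded (range g) := by
      rw [isBounded_iff_forall_norm_le]
      refine ⟨max C 1, ?_⟩
      rintro x ⟨z, rfl⟩
      rcases le_or_gt ‖z‖ M with hcase | hcase
      · exact le_max_of_le_left (hC z (by simpa [mem_closedBall, dist_eq_norm] using hcase))
      · exact le_max_of_le_right (hM hcase.le).le
    have hconst : ∀ z, g z = g 0 := fun z => hgd.apply_eq_apply_of_bounded hb z 0
    have hg00 : g 0 = 0 := by
      have h2 : Tendsto (fun _ : ℂ => g 0) (cobounded ℂ) (nhds 0) := hg0.congr hconst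
      exact (tendsto_nhds_unique h2 tendsto_const_nhds).symm
    have ha : a = 0 := by
      have h3 : Tendsto (fun z : ℂ => z * g z) (cobounded ℂ) (nhds 0) := by
        have he : (fun z : ℂ => z * g z) = fun _ => 0 := by
          funext z; rw [hconst z, hg00, mul_zero]
        rw [he]; exact tendsto_const_nhds
      exact tendsto_nhds_unique hzg h3
    simp [ha]
  | succ m ih =>
    intro c ρ hρ hdisj g a hg hzg
    set c₀ := c (Fin.last m) with hc₀
    set ρ₀ := ρ (Fin.last m) with hρ₀def
    have hρ₀ : 0 < ρ₀ := hρ _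
    have hgap : ∀ j : Fin m, ρ j.castSucc + ρ₀ < dist (c j.castSucc) c₀ := by
      intro j
      have hne : j.castSucc ≠ Fin.last m := (Fin.castSucc_lt_last j).ne
      exact (disjoint_closedBall_closedBall_iff (hρ _).le hρ₀.le).1 (hdisj hne)
    obtain ⟨ρ₁, hρ₁gt, hρ₁far⟩ : ∃ ρ₁ : ℝ, ρ₀ < ρ₁ ∧
        ∀ j : Fin m, ρ₁ + ρ j.castSucc < dist c₀ (c j.castSucc) := by
      rcases isEmpty_or_nonempty (Fin m) with hE | hNE
      · exact ⟨ρ₀ + 1, by linarith, fun j => (IsEmpty.false j).elim⟩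
      · obtain ⟨j₀, -, hj₀⟩ := Finset.exists_min_image Finset.univ
          (fun j : Fin m => dist c₀ (c j.castSucc) - ρ₀ - ρ j.castSucc) Finset.univ_nonempty
        have hε0 : 0 < dist c₀ (c j₀.castSucc) - ρ₀ - ρ j₀.castSucc := by
          have h2 := hgap j₀; rw [dist_comm] at h2; linarith
        refine ⟨ρ₀ + (dist c₀ (c j₀.castSucc) - ρ₀ - ρ j₀.castSucc) / 2, by linarith, fun j => ?_⟩
        have h1 := hj₀ j (Finset.mem_univ j)
        have h2 := hgap j; rw [dist_comm] at h2
        linarith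
    have hρ₁pos : 0 < ρ₁ := hρ₀.trans hρ₁gt
    -- the closed annulus is inside the domain of g
    have hannulus_sub : closedBall c₀ ρ₁ \ ball c₀ ρ₀
        ⊆ (⋃ j : Fin (m + 1), ball (c j) (ρ j))ᶜ := by
      intro x hx
      simp only [mem_compl_iff, mem_iUnion, not_exists]
      intro j hj
      rcases Fin.eq_castSucc_or_eq_last j with ⟨i, rfl⟩ | rfl
      · have h1 : dist x (c i.castSucc) < ρ i.castSucc := mem_ball.1 hj
        have h2 : dist x c₀ ≤ ρ₁ := mem_closedBall.1 hx.1
        have h3 := hρ₁far i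
        have h4 := dist_triangle c₀ x (c i.castSucc)
        rw [dist_comm c₀ x] at h4
        linarith
      · have h1 : dist x c₀ < ρ₀ := mem_ball.1 hj
        have h2 : ¬ dist x c₀ < ρ₀ := by simpa [mem_ball] using hx.2
        exact h2 h1
    have hcontg : ContinuousOn g ((⋃ j : Fin (m + 1), ball (c j) (ρ j))ᶜ) := hg.continuousOn
    have hcont_ann : ContinuousOn g (closedBall c₀ ρ₁ \ ball c₀ ρ₀) :=
      hcontg.mono hannulus_sub
    have hsph0 : sphere c₀ ρ₀ ⊆ closedBall c₀ ρ₁ \ ball c₀ ρ₀ := by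
      intro w hw
      have hd : dist w c₀ = ρ₀ := hw
      exact ⟨mem_closedBall.2 (by linarith), by simp [mem_ball, hd]⟩
    have hsph1 : sphere c₀ ρ₁ ⊆ closedBall c₀ ρ₁ \ ball c₀ ρ₀ := by
      intro w hw
      have hd : dist w c₀ = ρ₁ := hw
      refine ⟨mem_closedBall.2 hd.le, ?_⟩
      simp only [mem_ball, hd, not_lt]
      linarith
    have hgs0 : ContinuousOn g (sphere c₀ ρ₀) := hcont_ann.mono hsph0
    have hgs1 : ContinuousOn g (sphere c₀ ρ₁) := hcont_ann.mono hsph1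
    -- open set W inside the domain
    set W : Set ℂ := {x | ρ₀ < dist x c₀} ∩
      ⋂ i : Fin m, {x | ρ i.castSucc < dist x (c i.castSucc)} with hWdef
    have hWopen : IsOpen W := by
      refine IsOpen.inter ?_ (isOpen_iInter_of_finite fun i => ?_)
      · exact isOpen_lt continuous_const (continuous_id.dist continuous_const)
      · exact isOpen_lt continuous_const (continuous_id.dist continuous_const)
    have hWsub : W ⊆ (⋃ j : Fin (m + 1), ball (c j) (ρ j))ᶜ := by
      intro x hx
      simp only [mem_compl_iff, mem_iUnion, not_exists]
      intro j hj
      rcases Fin.eq_castSucc_or_eq_last j with ⟨i, rfl⟩ | rfl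
      · have h1 : ρ i.castSucc < dist x (c i.castSucc) := by
          have := (mem_iInter.1 hx.2) i
          simpa using this
        have h2 : dist x (c i.castSucc) < ρ i.castSucc := mem_ball.1 hj
        linarith
      · have h1 : ρ₀ < dist x c₀ := hx.1
        have h2 : dist x (c (Fin.last m)) < ρ (Fin.last m) := mem_ball.1 hj
        rw [← hc₀, ← hρ₀def] at h2
        linarith
    have hd_ann : ∀ x ∈ ball c₀ ρ₁ \ closedBall c₀ ρ₀, DifferentiableAt ℂ g x := by
      intro x hx
      have hx1 : ρ₀ < dist x c₀ := by simpa [mem_closedBall, not_le] using hx.2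
      have hx2 : ∀ i : Fin m, ρ i.castSucc < dist x (c i.castSucc) := by
        intro i
        have h1 : dist x c₀ < ρ₁ := mem_ball.1 hx.1
        have h2 := hρ₁far i
        have h3 := dist_triangle c₀ x (c i.castSucc)
        rw [dist_comm c₀ x] at h3
        linarith
      have hxW : x ∈ W := ⟨hx1, mem_iInter.2 fun i => hx2 i⟩
      exact (hg.mono hWsub).differentiableAt (hWopen.mem_nhds hxW)
    have hann : ∀ z ∈ ball c₀ ρ₁ \ closedBall c₀ ρ₀,
        cext g c₀ ρ₁ z = g z + cext g c₀ ρ₀ z := fun z hz =>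
      cext_annulus_eq hρ₀ hρ₁gt.le hcont_ann hd_ann hz
    -- the glued function h
    set S : Set ℂ := (⋃ j : Fin m, ball (c j.castSucc) (ρ j.castSucc))ᶜ with hSdef
    set h : ℂ → ℂ := fun z =>
      if dist z c₀ < ρ₁ then cext g c₀ ρ₁ z else g z + cext g c₀ ρ₀ z with hhdef
    have hTeq : ∀ z, ρ₀ < dist z c₀ → h z = g z + cext g c₀ ρ₀ z := by
      intro z h1
      by_cases hcase : dist z c₀ < ρ₁
      · rw [hhdef]
        simp only [if_pos hcase]
        exact hann z ⟨mem_ball.2 hcase, by simp only [mem_closedBall, not_le]; linarith⟩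
      · rw [hhdef]
        simp only [if_neg hcase]
    have hSdiff : DifferentiableOn ℂ h S := by
      intro x hx
      by_cases hcase : dist x c₀ < ρ₁
      · have hball : DifferentiableOn ℂ (cext g c₀ ρ₁) (ball c₀ ρ₁) :=
          cext_differentiableOn_ball hρ₁pos (hgs1.circleIntegrable hρ₁pos.le)
        have h1 : DifferentiableAt ℂ (cext g c₀ ρ₁) x :=
          hball.differentiableAt (isOpen_ball.mem_nhds (mem_ball.2 hcase))
        have h2 : h =ᶠ[nhds x] cext g c₀ ρ₁ := by
          filter_upwards [isOpen_ball.mem_nhds (mem_ball.2 hcase)] with y hy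
          rw [hhdef]
          simp only [if_pos (mem_ball.1 hy)]
        exact (h1.congr_of_eventuallyEq h2).differentiableWithinAt
      · have hx0 : ρ₀ < dist x c₀ := by
          push_neg at hcase
          linarith
        set O : Set ℂ := {y | ρ₀ < dist y c₀} with hOdef
        have hOopen : IsOpen O := isOpen_lt continuous_const (continuous_id.dist continuous_const)
        have hT : S ∩ O ∈ nhdsWithin x S := inter_mem_nhdsWithin S (hOopen.mem_nhds hx0)
        have hTsub : S ∩ O ⊆ (⋃ j : Fin (m + 1), ball (c j) (ρ j))ᶜ := by
          intro y hy
          simp only [mem_compl_iff, mem_iUnion, not_exists]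
          intro j hj
          rcases Fin.eq_castSucc_or_eq_last j with ⟨i, rfl⟩ | rfl
          · have := hy.1
            rw [hSdef] at this
            simp only [mem_compl_iff, mem_iUnion, not_exists] at this
            exact this i hj
          · have h1 : ρ₀ < dist y c₀ := hy.2
            have h2 : dist y (c (Fin.last m)) < ρ (Fin.last m) := mem_ball.1 hj
            rw [← hc₀, ← hρ₀def] at h2
            linarith
        have hdg : DifferentiableWithinAt ℂ g (S ∩ O) x := (hg.mono hTsub) x ⟨hx, hx0⟩
        have hdc : DifferentiableWithinAt ℂ (cext g c₀ ρ₀) (S ∩ O) x :=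
          (cext_differentiableAt_exterior hρ₀.le hgs0 hx0).differentiableWithinAt
        have heq : EqOn h (fun y => g y + cext g c₀ ρ₀ y) (S ∩ O) := fun y hy =>
          hTeq y hy.2
        have hwithin : DifferentiableWithinAt ℂ h (S ∩ O) x :=
          (hdg.add hdc).congr heq (hTeq x hx0)
        exact hwithin.mono_of_mem_nhdsWithin hT
    set a₀ : ℂ := (2 * Real.pi * Complex.I)⁻¹ * ∮ w in C(c₀, ρ₀), g w with ha₀def
    have hzh : Tendsto (fun z => z * h z) (cobounded ℂ) (nhds (a - a₀)) := by
      have hsum : Tendsto (fun z => z * g z + z * cext g c₀ ρ₀ z) (cobounded ℂ)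
          (nhds (a + -a₀)) := hzg.add (tendsto_z_cext hρ₀.le hgs0)
      rw [← sub_eq_add_neg] at hsum
      refine Tendsto.congr' ?_ hsum
      filter_upwards [ev_cobounded (‖c₀‖ + ρ₁ + 1)] with z hz
      have hz0 : ρ₀ < dist z c₀ := by
        have h1 : ‖z‖ - ‖c₀‖ ≤ ‖z - c₀‖ := norm_sub_norm_le z c₀
        rw [dist_eq_norm]
        linarith
      rw [hTeq z hz0, mul_add]
    have hρ' : ∀ j : Fin m, 0 < ρ j.castSucc := fun j => hρ _
    have hdisj' : Pairwise fun j k : Fin m =>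
        Disjoint (closedBall (c j.castSucc) (ρ j.castSucc))
          (closedBall (c k.castSucc) (ρ k.castSucc)) := fun j k hjk =>
      hdisj ((Fin.castSucc_injective m).ne hjk)
    have hih := ih (fun j => c j.castSucc) (fun j => ρ j.castSucc) hρ' hdisj' h (a - a₀)
      hSdiff hzh
    -- circle integrals of h over the small circles equal those of g
    have hcirc : ∀ j : Fin m, (∮ z in C(c j.castSucc, ρ j.castSucc), h z)
        = ∮ z in C(c j.castSucc, ρ j.castSucc), g z := by
      intro j
      have hfar : ∀ z ∈ closedBall (c j.castSucc) (ρ j.castSucc), ρ₁ < dist z c₀ := by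
        intro z hz
        have h1 : dist z (c j.castSucc) ≤ ρ j.castSucc := mem_closedBall.1 hz
        have h2 := hρ₁far j
        have h3 := dist_triangle c₀ z (c j.castSucc)
        rw [dist_comm c₀ z] at h3
        linarith
      have hsphere_sub : sphere (c j.castSucc) (ρ j.castSucc)
          ⊆ (⋃ k : Fin (m + 1), ball (c k) (ρ k))ᶜ := by
        intro w hw
        have hwd : dist w (c j.castSucc) = ρ j.castSucc := hw
        simp only [mem_compl_iff, mem_iUnion, not_exists]
        intro k hk
        rcases Fin.eq_castSucc_or_eq_last k with ⟨i, rfl⟩ | rfl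
        · by_cases hij : i = j
          · subst hij
            have := mem_ball.1 hk
            linarith [this, hwd.ge]
          · have hd := hdisj' hij
            have hw1 : w ∈ closedBall (c j.castSucc) (ρ j.castSucc) :=
              sphere_subset_closedBall hw
            have hw2 : w ∈ closedBall (c i.castSucc) (ρ i.castSucc) :=
              ball_subset_closedBall hk
            exact (Set.disjoint_left.1 hd) hw2 hw1
        · have h1 := hfar w (sphere_subset_closedBall hw)
          have h2 : dist w (c (Fin.last m)) < ρ (Fin.last m) := mem_ball.1 hk
          rw [← hc₀, ← hρ₀def] at h2
          linarith
      have hgc : ContinuousOn g (sphere (c j.castSucc) (ρ j.castSucc)) :=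
        hcontg.mono hsphere_sub
      have hcextc : ContinuousOn (cext g c₀ ρ₀) (sphere (c j.castSucc) (ρ j.castSucc)) := by
        intro w hw
        have h1 : ρ₀ < dist w c₀ :=
          hρ₁gt.trans (hfar w (sphere_subset_closedBall hw))
        exact (cext_differentiableAt_exterior hρ₀.le hgs0 h1).continuousAt.continuousWithinAt
      have heqsph : EqOn h (fun z => g z + cext g c₀ ρ₀ z)
          (sphere (c j.castSucc) (ρ j.castSucc)) := fun w hw =>
        hTeq w (hρ₁gt.trans (hfar w (sphere_subset_closedBall hw)))
      rw [circleIntegral.integral_congr (hρ' j).le heqsph,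
        circleIntegral_add (hgc.circleIntegrable (hρ' j).le)
          (hcextc.circleIntegrable (hρ' j).le),
        circleIntegral_cext_eq_zero hρ₀.le hgs0 (hρ' j).le
          (fun z hz => hρ₁gt.trans (hfar z hz)), add_zero]
    have hlast : 2 * (Real.pi : ℂ) * Complex.I * a₀ = ∮ z in C(c₀, ρ₀), g z := by
      rw [ha₀def, ← mul_assoc, mul_inv_cancel₀ Complex.two_pi_I_ne_zero, one_mul]
    have hfin : 2 * (Real.pi : ℂ) * Complex.I * (a - a₀)
        = ∑ j : Fin m, ∮ z in C(c j.castSucc, ρ j.castSucc), g z :=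
      hih.trans (Finset.sum_congr rfl fun j _ => hcirc j)
    rw [Fin.sum_univ_castSucc, ← hc₀, ← hρ₀def]
    linear_combination hfin + hlast

lemma tendsto_const_mul_inv_sub (b x : ℂ) :
    Tendsto (fun z : ℂ => b * (z - x)⁻¹) (cobounded ℂ) (nhds 0) := by
  apply tendsto_zero_of_bound ‖b‖ ‖x‖
  filter_upwards [ev_cobounded (‖x‖ + 1)] with z hz
  have h1 : ‖z‖ - ‖x‖ ≤ ‖z - x‖ := norm_sub_norm_le z x
  have h2 : 0 < ‖z‖ - ‖x‖ := by linarith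
  rw [norm_mul, norm_inv, div_eq_mul_inv]
  exact mul_le_mul_of_nonneg_left (inv_anti₀ h2 h1) (norm_nonneg b)

lemma main_bound (m : ℕ) (c : Fin m → ℂ) (r : Fin m → ℝ) (hr : ∀ j, 0 < r j)
    (hdisj : Pairwise fun j k =>
      Disjoint (Metric.closedBall (c j) (r j)) (Metric.closedBall (c k) (r k))) :
    ∀ f L d, Admissible (⋃ j, Metric.closedBall (c j) (r j)) f L d → ‖d‖ ≤ ∑ j, r j := by
  intro f L d hAdm
  obtain ⟨hdiff, hbdd, hL, hd⟩ := hAdm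
  have hgap : ∀ j k, j ≠ k → r j + r k < dist (c j) (c k) := fun j k hjk =>
    (disjoint_closedBall_closedBall_iff (hr j).le (hr k).le).1 (hdisj hjk)
  obtain ⟨ε₀, hε₀pos, hε₀⟩ : ∃ ε₀, 0 < ε₀ ∧
      ∀ j k, j ≠ k → (r j + ε₀) + (r k + ε₀) < dist (c j) (c k) := by
    rcases Finset.eq_empty_or_nonempty (Finset.univ.offDiag : Finset (Fin m × Fin m)) with hE | hNE
    · refine ⟨1, one_pos, fun j k hjk => ?_⟩
      exact absurd (show (j, k) ∈ (Finset.univ.offDiag : Finset (Fin m × Fin m)) from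
        Finset.mem_offDiag.2 ⟨Finset.mem_univ _, Finset.mem_univ _, hjk⟩) (by rw [hE]; simp)
    · obtain ⟨p, hpmem, hp⟩ := Finset.exists_min_image _
        (fun p : Fin m × Fin m => dist (c p.1) (c p.2) - r p.1 - r p.2) hNE
      have hpne : p.1 ≠ p.2 := (Finset.mem_offDiag.1 hpmem).2.2
      have hq : 0 < dist (c p.1) (c p.2) - r p.1 - r p.2 := by
        have := hgap p.1 p.2 hpne
        linarith
      refine ⟨(dist (c p.1) (c p.2) - r p.1 - r p.2) / 4, by linarith, fun j k hjk => ?_⟩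
      have h1 := hp (j, k) (show (j, k) ∈ (Finset.univ.offDiag : Finset (Fin m × Fin m)) from
        Finset.mem_offDiag.2 ⟨Finset.mem_univ _, Finset.mem_univ _, hjk⟩)
      have h2 := hgap j k hjk
      simp only at h1
      linarith
  have H : ∀ ε, 0 < ε → ε ≤ ε₀ → ‖d‖ ≤ (∑ j, r j) + m * ε := by
    intro ε hε hεle
    have hρ : ∀ j, 0 < r j + ε := fun j => by linarith [hr j]
    have hdisj2 : Pairwise fun j k =>
        Disjoint (closedBall (c j) (r j + ε)) (closedBall (c k) (r k + ε)) := fun j k hjk =>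
      (disjoint_closedBall_closedBall_iff (hρ j).le (hρ k).le).2
        (by have := hε₀ j k hjk; linarith)
    have hEsub : (⋃ j, closedBall (c j) (r j)) ⊆ ⋃ j, ball (c j) (r j + ε) :=
      iUnion_mono fun j => closedBall_subset_ball (by linarith)
    have hgdiff : DifferentiableOn ℂ (fun z => f z - L) (⋃ j, ball (c j) (r j + ε))ᶜ :=
      (hdiff.sub (differentiableOn_const L)).mono (compl_subset_compl.2 hEsub)
    have hkey := key_induction m c (fun j => r j + ε) hρ hdisj2 (fun z => f z - L) d hgdiff hd
    have hsphere : ∀ j, ∀ w ∈ sphere (c j) (r j + ε),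
        w ∈ (⋃ k, closedBall (c k) (r k))ᶜ := by
      intro j w hw
      have hwd : dist w (c j) = r j + ε := hw
      simp only [mem_compl_iff, mem_iUnion, not_exists]
      intro k hk
      have hk' : dist w (c k) ≤ r k := mem_closedBall.1 hk
      by_cases hjk : j = k
      · subst hjk
        linarith
      · have h1 := hε₀ j k hjk
        have h2 := dist_triangle (c j) w (c k)
        rw [dist_comm (c j) w] at h2
        linarith
    have hIbound : ∀ j, ‖∮ z in C(c j, r j + ε), (f z - L)‖ ≤ 2 * Real.pi * (r j + ε) := by
      intro j
      have hfc : ContinuousOn f (sphere (c j) (r j + ε)) :=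
        hdiff.continuousOn.mono (fun w hw => hsphere j w hw)
      have hfint : CircleIntegrable f (c j) (r j + ε) := hfc.circleIntegrable (hρ j).le
      have hLint : CircleIntegrable (fun _ : ℂ => L) (c j) (r j + ε) := circleIntegrable_const L _ _
      have hsplit := circleIntegral.integral_sub hfint hLint
      have hconst : (∮ _z in C(c j, r j + ε), L) = 0 := by
        refine Complex.circleIntegral_eq_zero_of_differentiable_on_off_countable (hρ j).le
          Set.countable_empty continuousOn_const ?_
        intro z _
        exact differentiableAt_const L
      have hfb : ‖∮ z in C(c j, r j + ε), f z‖ ≤ 2 * Real.pi * (r j + ε) * 1 :=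
        circleIntegral.norm_integral_le_of_norm_le_const (hρ j).le
          (fun w hw => hbdd w (hsphere j w hw))
      rw [hsplit, hconst, sub_zero]
      rw [mul_one] at hfb
      exact hfb
    have h2π : ‖(2 * (Real.pi : ℂ) * Complex.I)‖ = 2 * Real.pi := by
      simp [Real.pi_pos.le]
    have hnorm : 2 * Real.pi * ‖d‖ = ‖∑ j, ∮ z in C(c j, r j + ε), (f z - L)‖ := by
      rw [← hkey, norm_mul, h2π]
    have hsum : ‖∑ j, ∮ z in C(c j, r j + ε), (f z - L)‖
        ≤ ∑ j, (2 * Real.pi * (r j + ε)) :=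
      (norm_sum_le _ _).trans (Finset.sum_le_sum fun j _ => hIbound j)
    have hsum2 : ∑ j, (2 * Real.pi * (r j + ε)) = 2 * Real.pi * ((∑ j, r j) + m * ε) := by
      rw [← Finset.mul_sum]
      congr 1
      rw [Finset.sum_add_distrib, Finset.sum_const, Finset.card_fin, nsmul_eq_mul]
    have hfinal : 2 * Real.pi * ‖d‖ ≤ 2 * Real.pi * ((∑ j, r j) + m * ε) := by
      rw [hnorm, ← hsum2]
      exact hsum
    exact le_of_mul_le_mul_left hfinal Real.two_pi_pos
  refine le_of_forall_pos_le_add fun ε hε => ?_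
  have hε' : 0 < min ε₀ (ε / (m + 1)) := lt_min hε₀pos (by positivity)
  have hb := H _ hε' (min_le_left _ _)
  have hm1 : (0 : ℝ) < m + 1 := by positivity
  have h2 : (m : ℝ) * min ε₀ (ε / (m + 1)) ≤ ε := by
    have h3 : min ε₀ (ε / (m + 1)) ≤ ε / (m + 1) := min_le_right _ _
    have h4 : (m : ℝ) * min ε₀ (ε / (m + 1)) ≤ (m : ℝ) * (ε / (m + 1)) :=
      mul_le_mul_of_nonneg_left h3 (Nat.cast_nonneg m)
    have h5 : (m : ℝ) * (ε / (m + 1)) ≤ ε := by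
      rw [mul_div_assoc']
      rw [div_le_iff₀ hm1]
      nlinarith [hε.le]
    linarith
  linarith

lemma capacity_closedBall (x : ℂ) (t : ℝ) (ht : 0 < t) :
    analyticCapacity (closedBall x t) = t := by
  have hub : ∀ f L d, Admissible (closedBall x t) f L d → ‖d‖ ≤ t := by
    intro f L d hA
    have hmb := main_bound 1 (fun _ => x) (fun _ => t) (fun _ => ht)
      (fun j k hjk => absurd (Subsingleton.elim j k) hjk)
    have hU : (⋃ _j : Fin 1, closedBall x t) = closedBall x t := iUnion_const _
    rw [hU] at hmb
    have := hmb f L d hA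
    simpa using this
  -- witness
  set f : ℂ → ℂ := fun z => (t : ℂ) * (z - x)⁻¹ with hfdef
  have hAdm : Admissible (closedBall x t) f 0 (t : ℂ) := by
    refine ⟨?_, ?_, ?_, ?_⟩
    · intro z hz
      have hzx : z ≠ x := by
        intro h
        subst h
        exact hz (mem_closedBall_self ht.le)
      exact ((differentiableAt_const _).mul
        ((differentiableAt_id.sub_const x).inv (sub_ne_zero.2 hzx))).differentiableWithinAt
    · intro z hz
      have hzx : t < dist z x := by
        by_contra hcon
        push_neg at hcon
        exact hz (mem_closedBall.2 hcon)
      have hd : dist z x = ‖z - x‖ := dist_eq_norm _ _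
      rw [hfdef]
      simp only [norm_mul, norm_inv, Complex.norm_real, Real.norm_eq_abs,
        _root_.abs_of_pos ht]
      have h3 : t ≤ ‖z - x‖ := by rw [← hd]; linarith
      have h4 : 0 < ‖z - x‖ := lt_of_lt_of_le ht h3
      calc t * ‖z - x‖⁻¹ ≤ ‖z - x‖ * ‖z - x‖⁻¹ :=
            mul_le_mul_of_nonneg_right h3 (inv_nonneg.2 h4.le)
        _ = 1 := mul_inv_cancel₀ h4.ne'
    · rw [hfdef]
      exact tendsto_const_mul_inv_sub (t : ℂ) x
    · have h1 : Tendsto (fun z : ℂ => (t : ℂ) + ((t : ℂ) * x) * (z - x)⁻¹) (cobounded ℂ)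
          (nhds ((t : ℂ) + 0)) := tendsto_const_nhds.add (tendsto_const_mul_inv_sub _ _)
      rw [add_zero] at h1
      refine Tendsto.congr' ?_ h1
      filter_upwards [ev_cobounded (‖x‖ + 1)] with z hz
      have hzx : z - x ≠ 0 := by
        intro h
        have h2 : ‖z‖ - ‖x‖ ≤ ‖z - x‖ := norm_sub_norm_le z x
        rw [h, norm_zero] at h2
        linarith
      rw [hfdef]
      simp only [sub_zero]
      field_simp
      ring
  have hmem : t ∈ {r : ℝ | ∃ f L c, Admissible (closedBall x t) f L c ∧ r = ‖c‖} := by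
    refine ⟨f, 0, (t : ℂ), hAdm, ?_⟩
    simp [_root_.abs_of_pos ht]
  have hbdd : BddAbove {r : ℝ | ∃ f L c, Admissible (closedBall x t) f L c ∧ r = ‖c‖} := by
    refine ⟨t, ?_⟩
    rintro y ⟨f', L', d', hA', rfl⟩
    exact hub f' L' d' hA'
  refine le_antisymm ?_ (le_csSup hbdd hmem)
  refine Real.sSup_le ?_ ht.le
  rintro y ⟨f', L', d', hA', rfl⟩
  exact hub f' L' d' hA'

/-- For a finite union `E` of pairwise disjoint closed disks of radii `r j > 0`, every
admissible function satisfies `‖f′(∞)‖ ≤ ∑ r j`; consequently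
`γ(E) ≤ ∑ r j = ∑ γ(closedBall (c j) (r j))`. -/
theorem analyticCapacity_union_disks_le (m : ℕ) (hm : 1 ≤ m) (c : Fin m → ℂ)
    (r : Fin m → ℝ) (hr : ∀ j, 0 < r j)
    (hdisj : Pairwise fun j k =>
      Disjoint (Metric.closedBall (c j) (r j)) (Metric.closedBall (c k) (r k))) :
    (∀ f L d, Admissible (⋃ j, Metric.closedBall (c j) (r j)) f L d → ‖d‖ ≤ ∑ j, r j) ∧
      analyticCapacity (⋃ j, Metric.closedBall (c j) (r j)) ≤ ∑ j, r j ∧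
      ∑ j, r j = ∑ j, analyticCapacity (Metric.closedBall (c j) (r j)) := by
  have hA := main_bound m c r hr hdisj
  refine ⟨hA, ?_, ?_⟩
  · refine Real.sSup_le ?_ (Finset.sum_nonneg fun j _ => (hr j).le)
    rintro y ⟨f, L, d, hAdm, rfl⟩
    exact hA f L d hAdm
  · exact Finset.sum_congr rfl fun j _ => (capacity_closedBall (c j) (r j) (hr j)).symm
end

section
/- Let E ⊆ ℂ be compact, let closedBall(c_1, ρ_1), …, closedBall(c_m, ρ_m) be pairwise disjoint closed balls in ℂ with ρ_j > 0, and suppose E ⊆ ⋃_{j=1}^m ball(c_j, ρ_j) (the union of the corresponding open balls). Then every function f : ℂ → ℂ that is admissible for E satisfies ‖f′(∞)‖ ≤ ρ_1 + ⋯ + ρ_m. -/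
open Filter Bornology

section AuxiliaryLemmas

open Metric Complex Set intervalIntegral

lemma diffAt_cauchy_outside {g : ℂ → ℂ} {c₀ : ℂ} {r : ℝ} (hr : 0 < r)
    (hg : ContinuousOn g (Metric.sphere c₀ r)) {w : ℂ} (hw : r < dist w c₀) :
    DifferentiableAt ℂ (fun w => ∮ z in C(c₀, r), (w - z)⁻¹ * g z) w := by
  obtain ⟨M, hM⟩ := (isCompact_sphere c₀ r).exists_bound_of_continuousOn hg
  set M' := max M 0 with hM'
  have hM'0 : 0 ≤ M' := le_max_right _ _
  have hMle : ∀ z ∈ Metric.sphere c₀ r, ‖g z‖ ≤ M' := fun z hz => (hM z hz).trans (le_max_left _ _)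
  set ε := (dist w c₀ - r) / 2 with hε
  have hε0 : 0 < ε := by rw [hε]; linarith
  have hgc : Continuous fun θ : ℝ => g (circleMap c₀ r θ) :=
    hg.comp_continuous (continuous_circleMap _ _) fun θ => circleMap_mem_sphere _ hr.le θ
  have hden : ∀ x ∈ Metric.ball w ε, ∀ θ : ℝ, ε ≤ ‖x - circleMap c₀ r θ‖ := by
    intro x hx θ
    have h1 : dist (circleMap c₀ r θ) c₀ = r :=
      mem_sphere.mp (circleMap_mem_sphere _ hr.le θ)
    have h2 : dist w c₀ ≤ dist w x + dist x (circleMap c₀ r θ) + dist (circleMap c₀ r θ) c₀ :=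
      (dist_triangle w (circleMap c₀ r θ) c₀).trans (by
        have := dist_triangle w x (circleMap c₀ r θ); linarith)
    have h3 : dist w x < ε := by rw [dist_comm]; exact hx
    rw [← dist_eq_norm]
    linarith [hε]
  have hne : ∀ x ∈ Metric.ball w ε, ∀ θ : ℝ, x - circleMap c₀ r θ ≠ 0 := fun x hx θ => by
    have := hden x hx θ
    intro h
    rw [h, norm_zero] at this
    linarith
  set F : ℂ → ℝ → ℂ := fun x θ =>
    deriv (circleMap c₀ r) θ • ((x - circleMap c₀ r θ)⁻¹ * g (circleMap c₀ r θ)) with hF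
  set F' : ℂ → ℝ → ℂ := fun x θ =>
    deriv (circleMap c₀ r) θ • (-1 / (x - circleMap c₀ r θ) ^ 2 * g (circleMap c₀ r θ)) with hF'
  have hderc : Continuous fun θ => deriv (circleMap c₀ r) θ := by
    simp only [deriv_circleMap]
    exact (continuous_circleMap 0 r).mul continuous_const
  have hndc : ∀ θ : ℝ, ‖deriv (circleMap c₀ r) θ‖ = r := fun θ => by
    simp only [deriv_circleMap, norm_mul, norm_circleMap_zero, Complex.norm_I, mul_one,
      abs_of_pos hr]
  have hcontF : ∀ x ∈ Metric.ball w ε, Continuous (F x) := fun x hx =>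
    hderc.smul (((continuous_const.sub (continuous_circleMap _ _)).inv₀ (hne x hx)).mul hgc)
  have hcontF' : Continuous (F' w) := by
    refine hderc.smul ((Continuous.div continuous_const ?_ ?_).mul hgc)
    · exact (continuous_const.sub (continuous_circleMap _ _)).pow 2
    · exact fun θ => pow_ne_zero _ (hne w (mem_ball_self hε0) θ)
  have hbound : ∀ θ : ℝ, θ ∈ Set.uIoc (0:ℝ) (2 * Real.pi) →
      ∀ x ∈ Metric.ball w ε, ‖F' x θ‖ ≤ r * ((ε ^ 2)⁻¹ * M') := by
    intro θ _ x hx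
    rw [hF']
    simp only []
    rw [norm_smul, hndc]
    have h1 : ‖-1 / (x - circleMap c₀ r θ) ^ 2‖ ≤ (ε ^ 2)⁻¹ := by
      rw [norm_div, norm_neg, norm_one, one_div, norm_pow]
      have h2 : ε ^ 2 ≤ ‖x - circleMap c₀ r θ‖ ^ 2 :=
        pow_le_pow_left₀ hε0.le (hden x hx θ) 2
      exact inv_anti₀ (by positivity) h2
    apply mul_le_mul_of_nonneg_left _ hr.le
    rw [norm_mul]
    exact mul_le_mul h1 (hMle _ (circleMap_mem_sphere _ hr.le θ)) (norm_nonneg _) (by positivity)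
  have hdiff : ∀ θ : ℝ, θ ∈ Set.uIoc (0:ℝ) (2 * Real.pi) →
      ∀ x ∈ Metric.ball w ε, HasDerivAt (fun y => F y θ) (F' x θ) x := by
    intro θ _ x hx
    have h1 : HasDerivAt (fun x : ℂ => (x - circleMap c₀ r θ)⁻¹)
        (-1 / (x - circleMap c₀ r θ) ^ 2) x := by
      have h2 := ((hasDerivAt_id x).sub_const (circleMap c₀ r θ)).inv (hne x hx θ)
      exact h2
    exact (h1.mul_const (g (circleMap c₀ r θ))).const_smul (deriv (circleMap c₀ r) θ)
  have key := intervalIntegral.hasDerivAt_integral_of_dominated_loc_of_deriv_le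
    (F := F) (F' := fun x θ => F' x θ) (x₀ := w) (a := 0) (b := 2 * Real.pi) (μ := MeasureTheory.volume)
    (bound := fun _ => r * ((ε ^ 2)⁻¹ * M')) (Metric.ball_mem_nhds w hε0)
    (Filter.eventually_of_mem (Metric.ball_mem_nhds w hε0) fun x hx =>
      ((hcontF x hx).aestronglyMeasurable).restrict)
    ((hcontF w (mem_ball_self hε0)).intervalIntegrable _ _)
    hcontF'.aestronglyMeasurable.restrict
    (Filter.Eventually.of_forall hbound)
    intervalIntegrable_const
    (Filter.Eventually.of_forall hdiff)
  have heq : (fun x => ∮ z in C(c₀, r), (x - z)⁻¹ * g z)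
      = fun x => ∫ θ in (0:ℝ)..2 * Real.pi, F x θ := by
    funext x; rfl
  rw [heq]
  exact key.2.differentiableAt

lemma tendsto_mul_cauchy {g : ℂ → ℂ} {c₀ : ℂ} {r : ℝ} (hr : 0 < r)
    (hg : ContinuousOn g (Metric.sphere c₀ r)) :
    Tendsto (fun w => w * ∮ z in C(c₀, r), (w - z)⁻¹ * g z) (cobounded ℂ)
      (nhds (∮ z in C(c₀, r), g z)) := by
  obtain ⟨M, hM⟩ := (isCompact_sphere c₀ r).exists_bound_of_continuousOn hg
  set M' := max M 0 with hM'
  have hM'0 : 0 ≤ M' := le_max_right _ _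
  have hMle : ∀ z ∈ Metric.sphere c₀ r, ‖g z‖ ≤ M' := fun z hz => (hM z hz).trans (le_max_left _ _)
  set s := ‖c₀‖ + r with hs
  set A := ∮ z in C(c₀, r), g z with hA
  have hs0 : (0:ℝ) ≤ s := by rw [hs]; positivity
  have hgint : CircleIntegrable g c₀ r := hg.circleIntegrable hr.le
  -- pointwise estimate
  have est : ∀ w : ℂ, s < ‖w‖ →
      ‖w * (∮ z in C(c₀, r), (w - z)⁻¹ * g z) - A‖ ≤ 2 * Real.pi * r * (s * M' / (‖w‖ - s)) := by
    intro w hw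
    have hzn : ∀ z ∈ Metric.sphere c₀ r, ‖z‖ ≤ s := by
      intro z hz
      have : dist z c₀ = r := mem_sphere.mp hz
      calc ‖z‖ = ‖c₀ + (z - c₀)‖ := by ring_nf
        _ ≤ ‖c₀‖ + ‖z - c₀‖ := norm_add_le _ _
        _ ≤ s := by rw [hs, ← dist_eq_norm, this]
    have hwz : ∀ z ∈ Metric.sphere c₀ r, ‖w‖ - s ≤ ‖w - z‖ := by
      intro z hz
      have := norm_sub_norm_le w z
      have := hzn z hz
      calc ‖w‖ - s ≤ ‖w‖ - ‖z‖ := by linarith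
        _ ≤ ‖w - z‖ := norm_sub_norm_le w z
    have hwz0 : ∀ z ∈ Metric.sphere c₀ r, w - z ≠ 0 := by
      intro z hz h
      have := hwz z hz
      rw [h, norm_zero] at this
      linarith
    have hcont1 : ContinuousOn (fun z => w * ((w - z)⁻¹ * g z)) (Metric.sphere c₀ r) :=
      continuousOn_const.mul (((continuousOn_const.sub continuousOn_id).inv₀ hwz0).mul hg)
    have hint1 : CircleIntegrable (fun z => w * ((w - z)⁻¹ * g z)) c₀ r :=
      hcont1.circleIntegrable hr.le
    have e1 : w * (∮ z in C(c₀, r), (w - z)⁻¹ * g z) = ∮ z in C(c₀, r), w * ((w - z)⁻¹ * g z) :=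
      (circleIntegral.integral_const_mul w _ c₀ r).symm
    rw [e1, hA, ← circleIntegral.integral_sub hint1 hgint]
    apply circleIntegral.norm_integral_le_of_norm_le_const hr.le
    intro z hz
    have hne : w - z ≠ 0 := hwz0 z hz
    have h1 : w * ((w - z)⁻¹ * g z) - g z = (z / (w - z)) * g z := by
      field_simp
      ring
    rw [h1, norm_mul, norm_div]
    have h2 : ‖z‖ / ‖w - z‖ ≤ s / (‖w‖ - s) := by
      exact div_le_div₀ hs0 (hzn z hz) (by linarith) (hwz z hz)
    calc ‖z‖ / ‖w - z‖ * ‖g z‖ ≤ s / (‖w‖ - s) * M' :=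
          mul_le_mul h2 (hMle z hz) (norm_nonneg _) (div_nonneg hs0 (by linarith))
      _ = s * M' / (‖w‖ - s) := by ring
  -- the bound tends to zero
  have hb0 : Tendsto (fun w : ℂ => 2 * Real.pi * r * (s * M' / (‖w‖ - s))) (cobounded ℂ)
      (nhds 0) := by
    have h1 : Tendsto (fun t : ℝ => 2 * Real.pi * r * (s * M' / (t - s))) atTop (nhds 0) := by
      have h2 : Tendsto (fun t : ℝ => t - s) atTop atTop :=
        tendsto_atTop_add_const_right _ _ tendsto_id
      have h3 : Tendsto (fun t : ℝ => (t - s)⁻¹) atTop (nhds 0) := h2.inv_tendsto_atTop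
      have h4 := h3.const_mul (2 * Real.pi * r * (s * M'))
      rw [mul_zero] at h4
      convert h4 using 2 with t
      ring
    exact h1.comp tendsto_norm_cobounded_atTop
  rw [tendsto_iff_norm_sub_tendsto_zero]
  refine squeeze_zero' ?_ ?_ hb0
  · filter_upwards with w using norm_nonneg _
  · filter_upwards [tendsto_norm_cobounded_atTop.eventually_gt_atTop s] with w hw using est w hw

lemma tendsto_cauchy_zero {g : ℂ → ℂ} {c₀ : ℂ} {r : ℝ} (hr : 0 < r)
    (hg : ContinuousOn g (Metric.sphere c₀ r)) :
    Tendsto (fun w => ∮ z in C(c₀, r), (w - z)⁻¹ * g z) (cobounded ℂ) (nhds 0) := by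
  have h1 := (tendsto_inv₀_cobounded (α := ℂ)).mul (tendsto_mul_cauchy hr hg)
  rw [zero_mul] at h1
  apply h1.congr'
  filter_upwards [tendsto_norm_cobounded_atTop.eventually_gt_atTop 0] with w hw
  have hw0 : w ≠ 0 := by
    intro h; rw [h, norm_zero] at hw; exact lt_irrefl _ hw
  field_simp

lemma diffOn_cauchy_inside {g : ℂ → ℂ} {c₀ : ℂ} {r : ℝ} (hr : 0 < r)
    (hg : CircleIntegrable g c₀ r) :
    DifferentiableOn ℂ (fun w => ∮ z in C(c₀, r), (z - w)⁻¹ * g z) (Metric.ball c₀ r) := by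
  lift r to NNReal using hr.le with R hR
  have h0 : 0 < R := by exact_mod_cast hr
  have h1 := (hasFPowerSeriesOn_cauchy_integral (f := g) (c := c₀) (R := R)
    hg h0).differentiableOn
  rw [Metric.emetric_ball_nnreal] at h1
  have h2 := h1.const_smul (2 * Real.pi * Complex.I : ℂ)
  apply h2.congr
  intro w _
  rw [Pi.smul_apply, smul_smul, mul_inv_cancel₀ (by simp [Real.pi_ne_zero, Complex.I_ne_zero]), one_smul]
  rfl

lemma annulus_cauchy_formula {g : ℂ → ℂ} {c₀ : ℂ} {r R : ℝ} (hr : 0 < r) (hrR : r < R) {w : ℂ}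
    (h1 : r < dist w c₀) (h2 : dist w c₀ < R)
    (hc : ContinuousOn g (Metric.closedBall c₀ R \ Metric.ball c₀ r))
    (hd : ∀ z ∈ Metric.ball c₀ R \ Metric.closedBall c₀ r, DifferentiableAt ℂ g z) :
    (∮ z in C(c₀, R), (z - w)⁻¹ * g z) + (∮ z in C(c₀, r), (w - z)⁻¹ * g z)
      = (2 * Real.pi * Complex.I) * g w := by
  have hwmem : w ∈ Metric.ball c₀ R \ Metric.closedBall c₀ r :=
    ⟨mem_ball.mpr h2, by rw [mem_closedBall, not_le]; exact h1⟩
  have hdw : DifferentiableAt ℂ g w := hd w hwmem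
  have hopen : IsOpen (Metric.ball c₀ R \ Metric.closedBall c₀ r) :=
    isOpen_ball.sdiff isClosed_closedBall
  have hsub : Metric.ball c₀ R \ Metric.closedBall c₀ r ⊆
      Metric.closedBall c₀ R \ Metric.ball c₀ r := fun z hz =>
    ⟨ball_subset_closedBall hz.1, fun h => hz.2 (ball_subset_closedBall h)⟩
  have hmem : Metric.closedBall c₀ R \ Metric.ball c₀ r ∈ nhds w :=
    mem_nhds_iff.mpr ⟨_, hsub, hopen, hwmem⟩
  have hcd : ContinuousOn (dslope g w) (Metric.closedBall c₀ R \ Metric.ball c₀ r) :=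
    (continuousOn_dslope hmem).mpr ⟨hc, hdw⟩
  have hdd : ∀ z ∈ (Metric.ball c₀ R \ Metric.closedBall c₀ r) \ {w},
      DifferentiableAt ℂ (dslope g w) z := fun z hz =>
    (differentiableAt_dslope_of_ne (by simpa using hz.2)).mpr (hd z hz.1)
  have heq := Complex.circleIntegral_eq_of_differentiable_on_annulus_off_countable hr hrR.le
    (Set.countable_singleton w) hcd hdd
  -- z ≠ w on spheres
  have hneR : ∀ z ∈ Metric.sphere c₀ R, z ≠ w := by
    intro z hz h
    rw [h] at hz
    rw [mem_sphere] at hz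
    exact absurd hz (ne_of_lt h2)
  have hner : ∀ z ∈ Metric.sphere c₀ r, z ≠ w := by
    intro z hz h
    rw [h] at hz
    rw [mem_sphere] at hz
    rw [hz] at h1
    exact lt_irrefl _ h1
  have hsR : Metric.sphere c₀ R ⊆ Metric.closedBall c₀ R \ Metric.ball c₀ r := by
    intro z hz
    rw [mem_sphere] at hz
    constructor
    · rw [mem_closedBall, hz]
    · rw [mem_ball, hz]; exact not_lt.mpr (hrR.le)
  have hsr : Metric.sphere c₀ r ⊆ Metric.closedBall c₀ R \ Metric.ball c₀ r := by
    intro z hz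
    rw [mem_sphere] at hz
    constructor
    · rw [mem_closedBall, hz]; exact hrR.le
    · rw [mem_ball, hz]; exact lt_irrefl r
  have hdslope_eq : ∀ z, z ≠ w → dslope g w z = (z - w)⁻¹ * g z - (z - w)⁻¹ * g w := by
    intro z hz
    rw [dslope_of_ne _ hz, slope_def_field, div_eq_inv_mul, mul_sub]
  -- integrability bits
  have hKR : ContinuousOn (fun z => (z - w)⁻¹ * g z) (Metric.sphere c₀ R) :=
    ((continuousOn_id.sub continuousOn_const).inv₀
      (fun z hz => sub_ne_zero.mpr (hneR z hz))).mul (hc.mono hsR)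
  have hKr : ContinuousOn (fun z => (z - w)⁻¹ * g z) (Metric.sphere c₀ r) :=
    ((continuousOn_id.sub continuousOn_const).inv₀
      (fun z hz => sub_ne_zero.mpr (hner z hz))).mul (hc.mono hsr)
  have hCR : ContinuousOn (fun z => (z - w)⁻¹ * g w) (Metric.sphere c₀ R) :=
    ((continuousOn_id.sub continuousOn_const).inv₀
      (fun z hz => sub_ne_zero.mpr (hneR z hz))).mul continuousOn_const
  have hCr : ContinuousOn (fun z => (z - w)⁻¹ * g w) (Metric.sphere c₀ r) :=
    ((continuousOn_id.sub continuousOn_const).inv₀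
      (fun z hz => sub_ne_zero.mpr (hner z hz))).mul continuousOn_const
  have eR : (∮ z in C(c₀, R), dslope g w z)
      = (∮ z in C(c₀, R), (z - w)⁻¹ * g z) - (2 * Real.pi * Complex.I) * g w := by
    rw [circleIntegral.integral_congr (hr.trans hrR).le
      (fun z hz => hdslope_eq z (hneR z hz))]
    rw [circleIntegral.integral_sub (hKR.circleIntegrable (hr.trans hrR).le)
      (hCR.circleIntegrable (hr.trans hrR).le)]
    congr 1
    have : (fun z => (z - w)⁻¹ * g w) = fun z => (z - w)⁻¹ • g w := rfl
    rw [this, circleIntegral.integral_smul_const,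
      circleIntegral.integral_sub_inv_of_mem_ball (mem_ball.mpr h2), smul_eq_mul]
  have hzne : ∀ z ∈ Metric.closedBall c₀ r, z ≠ w := by
    intro z hz h
    rw [h, mem_closedBall] at hz
    exact absurd h1 (not_lt.mpr hz)
  have er0 : (∮ z in C(c₀, r), (z - w)⁻¹) = 0 := by
    apply Complex.circleIntegral_eq_zero_of_differentiable_on_off_countable hr.le
      Set.countable_empty
    · exact ContinuousOn.inv₀ (continuousOn_id.sub continuousOn_const)
        (fun z hz => sub_ne_zero.mpr (hzne z hz))
    · exact fun z hz => DifferentiableAt.inv (differentiableAt_id.sub_const w)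
        (sub_ne_zero.mpr (hzne z (ball_subset_closedBall hz.1)))
  have er : (∮ z in C(c₀, r), dslope g w z) = ∮ z in C(c₀, r), (z - w)⁻¹ * g z := by
    rw [circleIntegral.integral_congr hr.le (fun z hz => hdslope_eq z (hner z hz))]
    rw [circleIntegral.integral_sub (hKr.circleIntegrable hr.le)
      (hCr.circleIntegrable hr.le)]
    have : (fun z => (z - w)⁻¹ * g w) = fun z => (z - w)⁻¹ • g w := rfl
    rw [this, circleIntegral.integral_smul_const, er0, zero_smul, sub_zero]
  have eneg : (∮ z in C(c₀, r), (w - z)⁻¹ * g z) = -∮ z in C(c₀, r), (z - w)⁻¹ * g z := by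
    have h3 : (fun z => (w - z)⁻¹ * g z) = fun z => (-1 : ℂ) * ((z - w)⁻¹ * g z) := by
      funext z
      rw [← neg_sub z w, inv_neg]
      ring
    rw [h3, circleIntegral.integral_const_mul]
    ring
  rw [eneg]
  rw [eR, er] at heq
  linear_combination heq

open Filter Bornology Metric Complex Set

/-- If the compact set `E` is covered by the open balls of a system of pairwise
disjoint closed balls of radii `ρ j > 0`, then every admissible function for `E`
satisfies `‖f′(∞)‖ ≤ ∑ ρ j`. -/
theorem admissible_deriv_le_of_ball_cover (E : Set ℂ) (hE : IsCompact E)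
    (m : ℕ) (c : Fin m → ℂ) (ρ : Fin m → ℝ) (hρ : ∀ j, 0 < ρ j)
    (hdisj : Pairwise fun j k =>
      Disjoint (Metric.closedBall (c j) (ρ j)) (Metric.closedBall (c k) (ρ k)))
    (hcover : E ⊆ ⋃ j, Metric.ball (c j) (ρ j))
    (f : ℂ → ℂ) (L d : ℂ) (hf : Admissible E f L d) :
    ‖d‖ ≤ ∑ j, ρ j := by
  classical
  obtain ⟨hdiff, hbound, hlim, hlim'⟩ := hf
  have hEopen : IsOpen Eᶜ := hE.isClosed.isOpen_compl
  have hEcob : Eᶜ ∈ cobounded ℂ := hE.isBounded.compl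
  set g : ℂ → ℂ := fun z => f z - L with hgdef
  have hgd : ∀ z ∈ Eᶜ, DifferentiableAt ℂ g z := fun z hz =>
    (hdiff.differentiableAt (hEopen.mem_nhds hz)).sub_const L
  have hgc : ContinuousOn g Eᶜ := fun z hz => ((hgd z hz).continuousAt).continuousWithinAt
  have hg0 : Tendsto g (cobounded ℂ) (nhds 0) := by
    have h1 := hlim.sub_const L
    simpa using h1
  haveI : NeBot (cobounded ℂ) := by rw [Metric.cobounded_eq_cocompact]; infer_instance
  -- main estimate, parametrized by the enlargement δ of the radii
  have key : ∀ δ : ℝ, 0 < δ →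
      (∀ j k : Fin m, j ≠ k → ρ j + δ + (ρ k + δ) < dist (c j) (c k)) →
      ‖d‖ ≤ (∑ j, ρ j) + m * δ := by
    intro δ hδ hsep
    set rIn : Fin m → ℝ := fun j => ρ j + δ / 2 with hrIn
    set rOut : Fin m → ℝ := fun j => ρ j + δ with hrOut
    have hrIn0 : ∀ j, 0 < rIn j := fun j => by
      have := hρ j; simp only [hrIn]; linarith
    have hrOut0 : ∀ j, 0 < rOut j := fun j => by
      have := hρ j; simp only [hrOut]; linarith
    have hInOut : ∀ j, rIn j < rOut j := fun j => by
      simp only [hrIn, hrOut]; linarith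
    have hρIn : ∀ j, ρ j < rIn j := fun j => by
      simp only [hrIn]; linarith
    have hdisjOut : ∀ j k, j ≠ k →
        Disjoint (Metric.closedBall (c j) (rOut j)) (Metric.closedBall (c k) (rOut k)) := by
      intro j k hne
      apply closedBall_disjoint_closedBall
      have := hsep j k hne
      simp only [hrOut]
      linarith
    have hannE : ∀ j, ∀ z : ℂ, ρ j ≤ dist z (c j) → dist z (c j) ≤ rOut j → z ∈ Eᶜ := by
      intro j z h1 h2
      simp only [Set.mem_compl_iff]
      intro hzE
      obtain ⟨k, hk⟩ := Set.mem_iUnion.mp (hcover hzE)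
      rcases eq_or_ne k j with rfl | hne
      · exact absurd h1 (not_le.mpr (mem_ball.mp hk))
      · have hzj : z ∈ Metric.closedBall (c j) (rOut j) := mem_closedBall.mpr h2
        have hzk : z ∈ Metric.closedBall (c k) (rOut k) := mem_closedBall.mpr (by
          have h3 := mem_ball.mp hk
          simp only [hrOut]
          linarith)
        exact absurd hzj (Set.disjoint_left.mp (hdisjOut k j hne) hzk)
    have hsphereIn : ∀ j, Metric.sphere (c j) (rIn j) ⊆ Eᶜ := by
      intro j z hz
      have h1 : dist z (c j) = rIn j := mem_sphere.mp hz
      exact hannE j z (by rw [h1]; exact (hρIn j).le) (by rw [h1]; exact (hInOut j).le)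
    have hsphereOut : ∀ j, Metric.sphere (c j) (rOut j) ⊆ Eᶜ := by
      intro j z hz
      have h1 : dist z (c j) = rOut j := mem_sphere.mp hz
      exact hannE j z (by rw [h1]; exact ((hρIn j).trans (hInOut j)).le) (le_of_eq h1)
    have hannsub : ∀ j, Metric.closedBall (c j) (rOut j) \ Metric.ball (c j) (rIn j) ⊆ Eᶜ := by
      intro j z hz
      have h1 : rIn j ≤ dist z (c j) := not_lt.mp (fun h => hz.2 (mem_ball.mpr h))
      exact hannE j z ((hρIn j).le.trans h1) (mem_closedBall.mp hz.1)
    set Φ : Fin m → ℂ → ℂ := fun j w => ∮ z in C(c j, rIn j), (w - z)⁻¹ * g z with hΦdef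
    set Ψ : Fin m → ℂ → ℂ := fun k w => ∮ z in C(c k, rOut k), (z - w)⁻¹ * g z with hΨdef
    set A : Fin m → ℂ := fun j => ∮ z in C(c j, rIn j), g z with hAdef
    have hΦd : ∀ j (w : ℂ), rIn j < dist w (c j) → DifferentiableAt ℂ (Φ j) w := fun j w h =>
      diffAt_cauchy_outside (hrIn0 j) (hgc.mono (hsphereIn j)) h
    have hΨd : ∀ k, DifferentiableOn ℂ (Ψ k) (Metric.ball (c k) (rOut k)) := fun k =>
      diffOn_cauchy_inside (hrOut0 k) ((hgc.mono (hsphereOut k)).circleIntegrable (hrOut0 k).le)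
    have hΦ0 : ∀ j, Tendsto (Φ j) (cobounded ℂ) (nhds 0) := fun j =>
      tendsto_cauchy_zero (hrIn0 j) (hgc.mono (hsphereIn j))
    have hΦA : ∀ j, Tendsto (fun w => w * Φ j w) (cobounded ℂ) (nhds (A j)) := fun j =>
      tendsto_mul_cauchy (hrIn0 j) (hgc.mono (hsphereIn j))
    have hglue : ∀ k (w : ℂ), rIn k < dist w (c k) → dist w (c k) < rOut k →
        Ψ k w + Φ k w = (2 * Real.pi * Complex.I) * g w := by
      intro k w h1 h2
      exact annulus_cauchy_formula (hrIn0 k) (hInOut k) h1 h2 (hgc.mono (hannsub k))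
        (fun z hz => hgd z (hannsub k ⟨ball_subset_closedBall hz.1,
          fun h => hz.2 (ball_subset_closedBall h)⟩))
    set B : Set ℂ := ⋃ j, Metric.closedBall (c j) (rIn j) with hBdef
    have hBcl : IsClosed B := isClosed_iUnion_of_finite fun j => isClosed_closedBall
    have hBbd : IsBounded B := isBounded_iUnion.mpr fun j => isBounded_closedBall
    have hBmem : ∀ w : ℂ, w ∉ B ↔ ∀ j, rIn j < dist w (c j) := by
      intro w
      simp [hBdef, Set.mem_iUnion, mem_closedBall, not_le]
    set F : ℂ → ℂ := fun w =>
      if h : ∃ k, w ∈ Metric.ball (c k) (rOut k) then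
        Ψ h.choose w - ∑ j ∈ Finset.univ.erase h.choose, Φ j w
      else (2 * Real.pi * Complex.I) * g w - ∑ j, Φ j w with hFdef
    have huniq : ∀ (w : ℂ) (k k' : Fin m), w ∈ Metric.ball (c k) (rOut k) →
        w ∈ Metric.ball (c k') (rOut k') → k = k' := by
      intro w k k' h h'
      by_contra hne
      exact absurd (ball_subset_closedBall h')
        (Set.disjoint_left.mp (hdisjOut k k' hne) (ball_subset_closedBall h))
    have hchoose : ∀ (w : ℂ) (h : ∃ k, w ∈ Metric.ball (c k) (rOut k)) (k : Fin m),
        w ∈ Metric.ball (c k) (rOut k) → h.choose = k := fun w h k hk =>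
      huniq w h.choose k h.choose_spec hk
    have hF_out : ∀ w ∉ B, F w = (2 * Real.pi * Complex.I) * g w - ∑ j, Φ j w := by
      intro w hw
      by_cases h : ∃ k, w ∈ Metric.ball (c k) (rOut k)
      · simp only [hFdef]
        rw [dif_pos h]
        have h1 : rIn h.choose < dist w (c h.choose) := (hBmem w).mp hw h.choose
        have h2 : dist w (c h.choose) < rOut h.choose := mem_ball.mp h.choose_spec
        have e := hglue h.choose w h1 h2
        have hsum : (∑ j ∈ Finset.univ.erase h.choose, Φ j w) + Φ h.choose w = ∑ j, Φ j w :=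
          Finset.sum_erase_add _ _ (Finset.mem_univ _)
        linear_combination e - hsum
      · simp only [hFdef]
        rw [dif_neg h]
    have hFdiff : Differentiable ℂ F := by
      intro w
      by_cases h : ∃ k, w ∈ Metric.ball (c k) (rOut k)
      · obtain ⟨k, hk⟩ := h
        have hev : F =ᶠ[nhds w] fun x => Ψ k x - ∑ j ∈ Finset.univ.erase k, Φ j x := by
          filter_upwards [isOpen_ball.mem_nhds hk] with x hx
          have hex : ∃ k', x ∈ Metric.ball (c k') (rOut k') := ⟨k, hx⟩
          simp only [hFdef]
          rw [dif_pos hex, hchoose x hex k hx]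
        refine DifferentiableAt.congr_of_eventuallyEq ?_ hev
        apply DifferentiableAt.sub
        · exact (hΨd k).differentiableAt (isOpen_ball.mem_nhds hk)
        · apply DifferentiableAt.fun_sum
          intro j hj
          have hjk : j ≠ k := Finset.ne_of_mem_erase hj
          have hwj : rIn j < dist w (c j) := by
            by_contra hle
            push_neg at hle
            have hwj' : w ∈ Metric.closedBall (c j) (rOut j) :=
              mem_closedBall.mpr (hle.trans (hInOut j).le)
            exact absurd (ball_subset_closedBall hk)
              (Set.disjoint_left.mp (hdisjOut j k hjk) hwj')
          exact hΦd j w hwj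
      · push_neg at h
        have hout : ∀ j, rOut j ≤ dist w (c j) := fun j =>
          not_lt.mp (fun hlt => h j (mem_ball.mpr hlt))
        have hwE : w ∈ Eᶜ := by
          simp only [Set.mem_compl_iff]
          intro hwE'
          obtain ⟨k, hk⟩ := Set.mem_iUnion.mp (hcover hwE')
          have h3 := mem_ball.mp hk
          have h4 := hout k
          have h5 := hρ k
          simp only [hrOut] at h4
          linarith
        have hwB : w ∉ B := by
          rw [hBmem]
          intro j
          have := hout j
          exact lt_of_lt_of_le (hInOut j) this
        have hev : F =ᶠ[nhds w] fun x => (2 * Real.pi * Complex.I) * g x - ∑ j, Φ j x := by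
          filter_upwards [hBcl.isOpen_compl.mem_nhds hwB] with x hx using hF_out x hx
        refine DifferentiableAt.congr_of_eventuallyEq ?_ hev
        apply DifferentiableAt.sub
        · exact (hgd w hwE).const_mul _
        · exact DifferentiableAt.fun_sum fun j _ => hΦd j w ((hBmem w).mp hwB j)
    have hBcob : Bᶜ ∈ cobounded ℂ := hBbd.compl
    have hFt : Tendsto F (cobounded ℂ) (nhds 0) := by
      have h1 : Tendsto (fun x => (2 * Real.pi * Complex.I) * g x - ∑ j, Φ j x) (cobounded ℂ)
          (nhds ((2 * Real.pi * Complex.I) * 0 - ∑ _j : Fin m, (0 : ℂ))) :=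
        (hg0.const_mul _).sub (tendsto_finset_sum _ fun j _ => hΦ0 j)
      simp only [mul_zero, Finset.sum_const_zero, sub_zero] at h1
      exact Tendsto.congr' (by filter_upwards [hBcob] with x hx using (hF_out x hx).symm) h1
    have hF0 : ∀ x, F x = 0 := by
      intro x
      apply hFdiff.apply_eq_of_tendsto_cocompact x
      rwa [← Metric.cobounded_eq_cocompact]
    have hmain : ∀ w ∉ B, (2 * Real.pi * Complex.I) * g w = ∑ j, Φ j w := by
      intro w hw
      have h1 := hF_out w hw
      rw [hF0 w] at h1
      linear_combination -h1
    have hT1 : Tendsto (fun w => w * ((2 * Real.pi * Complex.I) * g w)) (cobounded ℂ)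
        (nhds ((2 * Real.pi * Complex.I) * d)) := by
      have h1 := hlim'.const_mul (2 * Real.pi * Complex.I : ℂ)
      exact Tendsto.congr (fun z => by rw [hgdef]; ring) h1
    have hT2 : Tendsto (fun w => ∑ j, w * Φ j w) (cobounded ℂ) (nhds (∑ j, A j)) :=
      tendsto_finset_sum _ fun j _ => hΦA j
    have hd_eq : (2 * Real.pi * Complex.I) * d = ∑ j, A j := by
      refine tendsto_nhds_unique ?_ hT2
      refine Tendsto.congr' ?_ hT1
      filter_upwards [hBcob] with w hw
      rw [hmain w hw, Finset.mul_sum]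
    have hAj : ∀ j, ‖A j‖ ≤ 2 * Real.pi * rIn j := by
      intro j
      have hfc : ContinuousOn f (Metric.sphere (c j) (rIn j)) :=
        hdiff.continuousOn.mono (hsphereIn j)
      have hLint : (∮ _z in C(c j, rIn j), L) = 0 :=
        Complex.circleIntegral_eq_zero_of_differentiable_on_off_countable (hrIn0 j).le
          Set.countable_empty continuousOn_const (fun z _ => differentiableAt_const L)
      have e : A j = (∮ z in C(c j, rIn j), f z) - ∮ _z in C(c j, rIn j), L := by
        simp only [hAdef, hgdef]
        rw [← circleIntegral.integral_sub (hfc.circleIntegrable (hrIn0 j).le)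
          (circleIntegrable_const L _ _)]
      rw [e, hLint, sub_zero]
      have h1 := circleIntegral.norm_integral_le_of_norm_le_const (C := 1) (hrIn0 j).le
        (fun z hz => hbound z (hsphereIn j hz))
      calc ‖∮ z in C(c j, rIn j), f z‖ ≤ 2 * Real.pi * rIn j * 1 := h1
        _ = 2 * Real.pi * rIn j := mul_one _
    have h2π : (0:ℝ) < 2 * Real.pi := by positivity
    have hnd : ‖(2 * Real.pi * Complex.I : ℂ) * d‖ = 2 * Real.pi * ‖d‖ := by
      rw [norm_mul]
      congr 1
      simp [_root_.abs_of_pos Real.pi_pos]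
    have hsum : ∑ j, 2 * Real.pi * rIn j = 2 * Real.pi * ((∑ j, ρ j) + m * (δ / 2)) := by
      rw [← Finset.mul_sum]
      congr 1
      simp only [hrIn]
      rw [Finset.sum_add_distrib, Finset.sum_const, Finset.card_univ, Fintype.card_fin,
        nsmul_eq_mul]
    have hfin : 2 * Real.pi * ‖d‖ ≤ 2 * Real.pi * ((∑ j, ρ j) + m * (δ / 2)) := by
      calc 2 * Real.pi * ‖d‖ = ‖(2 * Real.pi * Complex.I : ℂ) * d‖ := hnd.symm
        _ = ‖∑ j, A j‖ := by rw [hd_eq]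
        _ ≤ ∑ j, ‖A j‖ := norm_sum_le _ _
        _ ≤ ∑ j, 2 * Real.pi * rIn j := Finset.sum_le_sum fun j _ => hAj j
        _ = _ := hsum
    have h6 : ‖d‖ ≤ (∑ j, ρ j) + m * (δ / 2) := le_of_mul_le_mul_left hfin h2π
    have h7 : (m:ℝ) * (δ / 2) ≤ m * δ := by
      apply mul_le_mul_of_nonneg_left (by linarith) (Nat.cast_nonneg m)
    linarith
  -- choice of δ₀
  obtain ⟨δ₀, hδ₀, hsep₀⟩ : ∃ δ₀ : ℝ, 0 < δ₀ ∧
      ∀ j k : Fin m, j ≠ k → ρ j + δ₀ + (ρ k + δ₀) < dist (c j) (c k) := by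
    by_cases hm : (Finset.univ.offDiag : Finset (Fin m × Fin m)).Nonempty
    · set S := (Finset.univ.offDiag : Finset (Fin m × Fin m)) with hS
      set gap : Fin m × Fin m → ℝ := fun p => dist (c p.1) (c p.2) - ρ p.1 - ρ p.2 with hgap
      have hgap0 : ∀ p ∈ S, 0 < gap p := by
        intro p hp
        have hne : p.1 ≠ p.2 := (Finset.mem_offDiag.mp hp).2.2
        have h1 := (disjoint_closedBall_closedBall_iff (hρ p.1).le (hρ p.2).le).mp (hdisj hne)
        simp only [hgap]
        linarith
      have hinfpos : 0 < S.inf' hm gap := (Finset.lt_inf'_iff hm).mpr hgap0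
      refine ⟨S.inf' hm gap / 3, by linarith, ?_⟩
      intro j k hne
      have hjk : (j, k) ∈ S := Finset.mem_offDiag.mpr ⟨Finset.mem_univ _, Finset.mem_univ _, hne⟩
      have h1 : S.inf' hm gap ≤ gap (j, k) := Finset.inf'_le _ hjk
      simp only [hgap] at h1
      linarith
    · refine ⟨1, one_pos, fun j k hne => ?_⟩
      have hjk : (j, k) ∈ (Finset.univ.offDiag : Finset (Fin m × Fin m)) :=
        Finset.mem_offDiag.mpr ⟨Finset.mem_univ _, Finset.mem_univ _, hne⟩
      exact absurd hjk (fun h => hm ⟨_, h⟩)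
  -- let δ → 0
  refine le_of_forall_pos_le_add fun ε hε => ?_
  set δ := min δ₀ (ε / ((m:ℝ) + 1)) with hδdef
  have hδpos : 0 < δ := lt_min hδ₀ (by positivity)
  have hsep : ∀ j k : Fin m, j ≠ k → ρ j + δ + (ρ k + δ) < dist (c j) (c k) := by
    intro j k hne
    have h1 := hsep₀ j k hne
    have h2 : δ ≤ δ₀ := min_le_left _ _
    linarith
  have h2 := key δ hδpos hsep
  have h3 : (m:ℝ) * δ ≤ ε := by
    have h4 : δ ≤ ε / ((m:ℝ) + 1) := min_le_right _ _
    have h5 : (0:ℝ) < (m:ℝ) + 1 := by positivity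
    calc (m:ℝ) * δ ≤ (m:ℝ) * (ε / ((m:ℝ) + 1)) :=
          mul_le_mul_of_nonneg_left h4 (Nat.cast_nonneg m)
      _ ≤ ((m:ℝ) + 1) * (ε / ((m:ℝ) + 1)) :=
          mul_le_mul_of_nonneg_right (by linarith) (by positivity)
      _ = ε := by field_simp
  linarith

end AuxiliaryLemmas
end
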